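/- arXiv:math/0310407 — 6 statements merged into one kernel-verified Lean document; each statement's English description precedes it below -/
import Mathlib

section
/- Let A be a bounded operator on ℓ²(ℤ,H) which commutes with the bilateral shift W. Then ‖P₊ A P₊‖ = ‖A‖. (This is the key compression lemma of Section 2, proved using the projections Pₙ onto {ξ : ξ(m) = 0 for m < n} and the fact that Pₙ → 1 strongly as n → −∞.) -/
open MeasureTheory ContinuousLinearMap

/-- Evaluation of a word in formal letters `x i` (`b = false`) and `x i *` (`b = true`)
at the tuple of operators `T`. -/
noncomputable def evalWord {k : ℕ} {H : Type*} [NormedAddCommGroup H] [InnerProductSpace ℂ H]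
    [CompleteSpace H] (T : Fin k → H →L[ℂ] H) : List (Fin k × Bool) → H →L[ℂ] H
  | [] => 1
  | (i, b) :: w => (if b then adjoint (T i) else T i) * evalWord T w

/-- A *-polynomial in `k` operator variables is a finite ℂ-linear combination of words;
`evalPoly T p` is its evaluation at the operators `T 0, ..., T (k-1)`. -/
noncomputable def evalPoly {k : ℕ} {H : Type*} [NormedAddCommGroup H] [InnerProductSpace ℂ H]
    [CompleteSpace H] (T : Fin k → H →L[ℂ] H) (p : List (ℂ × List (Fin k × Bool))) : H →L[ℂ] H :=
  (p.map fun cw => cw.1 • evalWord T cw.2).sum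

/-- The degree of a *-polynomial: the maximal length of a word occurring in it. -/
def polyDegree {k : ℕ} (p : List (ℂ × List (Fin k × Bool))) : ℕ :=
  (p.map fun cw => cw.2.length).foldr max 0

section Aux

variable {H : Type*} [NormedAddCommGroup H] [InnerProductSpace ℂ H] [CompleteSpace H]

private lemma two_toReal : ((2 : ENNReal)).toReal = 2 := by norm_num

private lemma summable_coord (f : lp (fun _ : ℤ => H) 2) :
    Summable fun m : ℤ => ‖f m‖ ^ ((2 : ENNReal)).toReal :=
  (lp.memℓp f).summable (by norm_num)

/-- Coordinatewise norm comparison gives norm comparison in `ℓ²`. -/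
private lemma lp_norm_le_of_coord {f g : lp (fun _ : ℤ => H) 2}
    (h : ∀ m, ‖f m‖ ≤ ‖g m‖) : ‖f‖ ≤ ‖g‖ := by
  apply lp.norm_le_of_tsum_le (by norm_num) (norm_nonneg _)
  rw [lp.norm_rpow_eq_tsum (by norm_num) g]
  exact Summable.tsum_le_tsum
    (fun m => Real.rpow_le_rpow (norm_nonneg _) (h m) (by norm_num))
    (summable_coord f) (summable_coord g)

private lemma memℓp_shift (ξ : lp (fun _ : ℤ => H) 2) :
    Memℓp (fun m : ℤ => ξ (m + 1)) 2 := by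
  apply memℓp_gen
  exact ((Equiv.addRight (1:ℤ)).summable_iff
    (f := fun m => ‖ξ m‖ ^ ((2 : ENNReal)).toReal)).2 (summable_coord ξ)

/-- The backwards bilateral shift. -/
noncomputable def shiftV : lp (fun _ : ℤ => H) 2 →L[ℂ] lp (fun _ : ℤ => H) 2 :=
  LinearMap.mkContinuous
    { toFun := fun ξ => (⟨fun m => ξ (m + 1), memℓp_shift ξ⟩ : lp (fun _ : ℤ => H) 2)
      map_add' := by
        intro ξ η
        apply lp.ext
        funext m
        simp [lp.coeFn_add]
        rfl
      map_smul' := by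
        intro c ξ
        apply lp.ext
        funext m
        simp [lp.coeFn_smul] }
    1
    (by
      intro ξ
      rw [one_mul]
      apply lp.norm_le_of_tsum_le (by norm_num) (norm_nonneg _)
      rw [lp.norm_rpow_eq_tsum (by norm_num) ξ]
      exact le_of_eq (((Equiv.addRight (1:ℤ)).tsum_eq
        (f := fun m => ‖ξ m‖ ^ ((2 : ENNReal)).toReal))))

@[simp] lemma shiftV_apply (ξ : lp (fun _ : ℤ => H) 2) (m : ℤ) :
    (shiftV ξ) m = ξ (m + 1) := rfl

/-- Tail sums of a square-summable sequence are eventually small. -/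
private lemma tail_small (η : lp (fun _ : ℤ => H) 2) {ε : ℝ} (hε : 0 < ε) :
    ∃ N : ℕ, ∀ n : ℕ, N ≤ n →
      (∑' m : ℤ, if (0:ℤ) ≤ m + n then (0:ℝ) else ‖η m‖ ^ ((2 : ENNReal)).toReal) ≤ ε := by
  set f : ℤ → ℝ := fun m => ‖η m‖ ^ ((2 : ENNReal)).toReal with hf
  have hfs : Summable f := summable_coord η
  have hfnn : ∀ m, 0 ≤ f m := fun m => Real.rpow_nonneg (norm_nonneg _) _
  have h0 := tendsto_tsum_compl_atTop_zero f
  have hev : ∀ᶠ s : Finset ℤ in Filter.atTop,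
      (∑' a : {x // x ∉ s}, f a) < ε := by
    have := h0.eventually (eventually_lt_nhds hε)
    exact this
  obtain ⟨s₀, hs₀⟩ := Filter.eventually_atTop.1 hev
  refine ⟨(s₀.sup Int.natAbs) + 1, fun n hn => ?_⟩
  have hsub : (∑' m : ℤ, if (0:ℤ) ≤ m + n then (0:ℝ) else f m)
      ≤ ∑' a : {x // x ∉ s₀}, f a := by
    have heq : (∑' a : {x // x ∉ s₀}, f a)
        = ∑' m : ℤ, Set.indicator {x : ℤ | x ∉ s₀} f m := tsum_subtype _ f
    rw [heq]
    refine Summable.tsum_le_tsum (fun m => ?_) ?_ (hfs.indicator _)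
    · by_cases hm : (0:ℤ) ≤ m + n
      · simp only [hm, if_true]
        exact Set.indicator_nonneg (fun x _ => hfnn x) m
      · simp only [hm, if_false]
        have hmem : m ∈ {x : ℤ | x ∉ s₀} := by
          intro hms
          have := Finset.le_sup (f := Int.natAbs) hms
          omega
        rw [Set.indicator_of_mem hmem]
    · apply Summable.of_nonneg_of_le (fun m => ?_) (fun m => ?_) hfs
      · by_cases hm : (0:ℤ) ≤ m + n <;> simp [hm, hfnn m]
      · by_cases hm : (0:ℤ) ≤ m + n <;> simp [hm, hfnn m]
  exact hsub.trans (hs₀ s₀ le_rfl).le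

end Aux

set_option maxHeartbeats 1000000
set_option synthInstance.maxHeartbeats 400000

/-- If `A` is a bounded operator on `ℓ²(ℤ,H)` commuting with the bilateral
shift `W`, then `‖P₊ A P₊‖ = ‖A‖`, where `P₊` is the orthogonal projection onto
`{ξ : ξ(n) = 0 for all n < 0}`. -/
theorem stmt0 {H : Type} [NormedAddCommGroup H] [InnerProductSpace ℂ H] [CompleteSpace H]
    (W Pplus A : lp (fun _ : ℤ => H) 2 →L[ℂ] lp (fun _ : ℤ => H) 2)
    (hW : ∀ (ξ : lp (fun _ : ℤ => H) 2) (n : ℤ), (W ξ) n = ξ (n - 1))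
    (hP : ∀ (ξ : lp (fun _ : ℤ => H) 2) (n : ℤ), (Pplus ξ) n = if 0 ≤ n then ξ n else 0)
    (hcomm : A * W = W * A) :
    ‖Pplus * A * Pplus‖ = ‖A‖ := by
  set V : lp (fun _ : ℤ => H) 2 →L[ℂ] lp (fun _ : ℤ => H) 2 := shiftV with hVdef
  have hV : ∀ (ξ : lp (fun _ : ℤ => H) 2) (m : ℤ), (V ξ) m = ξ (m + 1) := fun ξ m => rfl
  have hVW : V * W = 1 := by
    refine ContinuousLinearMap.ext fun ξ => lp.ext (funext fun m => ?_)
    rw [ContinuousLinearMap.mul_apply, hV, hW, ContinuousLinearMap.one_apply,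
      add_sub_cancel_right]
  have hWV : W * V = 1 := by
    refine ContinuousLinearMap.ext fun ξ => lp.ext (funext fun m => ?_)
    rw [ContinuousLinearMap.mul_apply, hW, hV, ContinuousLinearMap.one_apply,
      sub_add_cancel]
  have hWpow : ∀ (n : ℕ) (ξ : lp (fun _ : ℤ => H) 2) (m : ℤ),
      ((W ^ n) ξ) m = ξ (m - n) := by
    intro n
    induction n with
    | zero => intro ξ m; simp
    | succ n ih =>
      intro ξ m
      rw [pow_succ, ContinuousLinearMap.mul_apply, ih, hW]
      congr 1
      push_cast
      ring
  have hVpow : ∀ (n : ℕ) (ξ : lp (fun _ : ℤ => H) 2) (m : ℤ),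
      ((V ^ n) ξ) m = ξ (m + n) := by
    intro n
    induction n with
    | zero => intro ξ m; simp
    | succ n ih =>
      intro ξ m
      rw [pow_succ, ContinuousLinearMap.mul_apply, ih, hV]
      congr 1
      push_cast
      ring
  have hVWpow : ∀ n : ℕ, V ^ n * W ^ n = 1 := by
    intro n
    induction n with
    | zero => simp
    | succ n ih =>
      rw [pow_succ V, pow_succ' W, mul_assoc, ← mul_assoc V W, hVW, one_mul, ih]
  have hWVpow : ∀ n : ℕ, W ^ n * V ^ n = 1 := by
    intro n
    induction n with
    | zero => simp
    | succ n ih =>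
      rw [pow_succ W, pow_succ' V, mul_assoc, ← mul_assoc W V, hWV, one_mul, ih]
  have hAV : A * V = V * A := by
    calc A * V = (V * W) * (A * V) := by rw [hVW, one_mul]
      _ = V * ((W * A) * V) := by simp only [mul_assoc]
      _ = V * ((A * W) * V) := by rw [hcomm]
      _ = (V * A) * (W * V) := by simp only [mul_assoc]
      _ = V * A := by rw [hWV, mul_one]
  have hAWpow : ∀ n : ℕ, A * W ^ n = W ^ n * A := by
    intro n
    induction n with
    | zero => simp
    | succ n ih =>
      rw [pow_succ, ← mul_assoc, ih, mul_assoc, hcomm, ← mul_assoc]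
  have hAVpow : ∀ n : ℕ, A * V ^ n = V ^ n * A := by
    intro n
    induction n with
    | zero => simp
    | succ n ih =>
      rw [pow_succ, ← mul_assoc, ih, mul_assoc, hAV, ← mul_assoc]
  set Q : ℕ → (lp (fun _ : ℤ => H) 2 →L[ℂ] lp (fun _ : ℤ => H) 2) :=
    fun n => V ^ n * Pplus * W ^ n with hQdef
  have hQcoord : ∀ (n : ℕ) (ξ : lp (fun _ : ℤ => H) 2) (m : ℤ),
      (Q n ξ) m = if 0 ≤ m + n then ξ m else 0 := by
    intro n ξ m
    show ((V ^ n * Pplus * W ^ n) ξ) m = _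
    rw [ContinuousLinearMap.mul_apply, ContinuousLinearMap.mul_apply, hVpow, hP]
    by_cases h : (0 : ℤ) ≤ m + n
    · rw [if_pos h, if_pos h, hWpow, add_sub_cancel_right]
    · rw [if_neg h, if_neg h]
  have hQnorm : ∀ (n : ℕ) (η : lp (fun _ : ℤ => H) 2), ‖Q n η‖ ≤ ‖η‖ := by
    intro n η
    refine lp_norm_le_of_coord fun m => ?_
    rw [hQcoord]
    split
    · exact le_rfl
    · simp
  have hQAQ : ∀ n : ℕ, Q n * A * Q n = V ^ n * (Pplus * A * Pplus) * W ^ n := by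
    intro n
    have h1 : W ^ n * (A * (V ^ n * (Pplus * W ^ n))) = A * (Pplus * W ^ n) := by
      rw [show A * (V ^ n * (Pplus * W ^ n)) = V ^ n * (A * (Pplus * W ^ n)) from by
        rw [← mul_assoc, hAVpow n, mul_assoc], ← mul_assoc, hWVpow n, one_mul]
    calc Q n * A * Q n
        = V ^ n * (Pplus * (W ^ n * (A * (V ^ n * (Pplus * W ^ n))))) := by
          simp only [hQdef, mul_assoc]
      _ = V ^ n * (Pplus * (A * (Pplus * W ^ n))) := by rw [h1]
      _ = V ^ n * (Pplus * A * Pplus) * W ^ n := by simp only [mul_assoc]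
  have hV1 : ‖V‖ ≤ 1 := LinearMap.mkContinuous_norm_le _ zero_le_one _
  have hW1 : ‖W‖ ≤ 1 := by
    refine ContinuousLinearMap.opNorm_le_bound _ zero_le_one fun ξ => ?_
    rw [one_mul]
    apply lp.norm_le_of_tsum_le (by norm_num) (norm_nonneg _)
    rw [lp.norm_rpow_eq_tsum (by norm_num) ξ]
    refine le_of_eq ?_
    have h1 : (∑' m : ℤ, ‖(W ξ) m‖ ^ (2 : ENNReal).toReal)
        = ∑' m : ℤ, ‖ξ (m - 1)‖ ^ (2 : ENNReal).toReal :=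
      tsum_congr fun m => by rw [hW]
    rw [h1]
    exact (Equiv.subRight (1 : ℤ)).tsum_eq (f := fun m => ‖ξ m‖ ^ (2 : ENNReal).toReal)
  have hP1 : ‖Pplus‖ ≤ 1 := by
    refine ContinuousLinearMap.opNorm_le_bound _ zero_le_one fun ξ => ?_
    rw [one_mul]
    refine lp_norm_le_of_coord fun m => ?_
    rw [hP]
    split
    · exact le_rfl
    · simp
  have hVn : ∀ n : ℕ, ‖V ^ n‖ ≤ 1 := by
    intro n
    induction n with
    | zero => rw [pow_zero, ContinuousLinearMap.one_def]; exact ContinuousLinearMap.norm_id_le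
    | succ n ih =>
      rw [pow_succ]
      refine le_trans (norm_mul_le _ _) ?_
      nlinarith [norm_nonneg (V ^ n), norm_nonneg V]
  have hWn : ∀ n : ℕ, ‖W ^ n‖ ≤ 1 := by
    intro n
    induction n with
    | zero => rw [pow_zero, ContinuousLinearMap.one_def]; exact ContinuousLinearMap.norm_id_le
    | succ n ih =>
      rw [pow_succ]
      refine le_trans (norm_mul_le _ _) ?_
      nlinarith [norm_nonneg (W ^ n), norm_nonneg W]
  have hQAQnorm : ∀ n : ℕ, ‖Q n * A * Q n‖ ≤ ‖Pplus * A * Pplus‖ := by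
    intro n
    rw [hQAQ n]
    calc ‖V ^ n * (Pplus * A * Pplus) * W ^ n‖
        ≤ ‖V ^ n * (Pplus * A * Pplus)‖ * ‖W ^ n‖ := norm_mul_le _ _
      _ ≤ (‖V ^ n‖ * ‖Pplus * A * Pplus‖) * ‖W ^ n‖ :=
          mul_le_mul_of_nonneg_right (norm_mul_le _ _) (norm_nonneg _)
      _ ≤ (1 * ‖Pplus * A * Pplus‖) * 1 := by
          gcongr
          · exact hVn n
          · exact hWn n
      _ = ‖Pplus * A * Pplus‖ := by ring
  have hdiff : ∀ (η : lp (fun _ : ℤ => H) 2) (n : ℕ) {δ : ℝ}, 0 < δ →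
      ((∑' m : ℤ, if (0:ℤ) ≤ m + n then (0:ℝ) else ‖η m‖ ^ (2 : ENNReal).toReal)
        ≤ δ ^ (2 : ENNReal).toReal) → ‖η - Q n η‖ ≤ δ := by
    intro η n δ hδ hsum
    apply lp.norm_le_of_tsum_le (by norm_num) hδ.le
    calc (∑' m : ℤ, ‖(η - Q n η) m‖ ^ (2 : ENNReal).toReal)
        = ∑' m : ℤ, (if (0:ℤ) ≤ m + n then (0:ℝ) else ‖η m‖ ^ (2 : ENNReal).toReal) := by
          refine tsum_congr fun m => ?_
          have hc : (η - Q n η) m = η m - (Q n η) m := by rw [lp.coeFn_sub]; rfl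
          rw [hc, hQcoord]
          by_cases h : (0 : ℤ) ≤ m + n
          · rw [if_pos h, if_pos h, sub_self, norm_zero, Real.zero_rpow (by norm_num)]
          · rw [if_neg h, if_neg h, sub_zero]
      _ ≤ δ ^ (2 : ENNReal).toReal := hsum
  refine le_antisymm ?_ ?_
  · calc ‖Pplus * A * Pplus‖ ≤ ‖Pplus * A‖ * ‖Pplus‖ := norm_mul_le _ _
      _ ≤ (‖Pplus‖ * ‖A‖) * ‖Pplus‖ :=
          mul_le_mul_of_nonneg_right (norm_mul_le _ _) (norm_nonneg _)
      _ ≤ (1 * ‖A‖) * 1 := by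
          gcongr <;> exact hP1
      _ = ‖A‖ := by ring
  · refine ContinuousLinearMap.opNorm_le_bound _ (norm_nonneg _) fun ξ => ?_
    refine le_of_forall_pos_le_add fun ε hε => ?_
    have hA1 : (0:ℝ) < ‖A‖ + 1 := by positivity
    set δ₁ : ℝ := ε / (2 * (‖A‖ + 1)) with hδ₁def
    have hδ₁ : 0 < δ₁ := by positivity
    obtain ⟨N₁, h₁⟩ := tail_small ξ (Real.rpow_pos_of_pos hδ₁ (2 : ENNReal).toReal)
    obtain ⟨N₂, h₂⟩ := tail_small (A ξ) (Real.rpow_pos_of_pos (half_pos hε) (2 : ENNReal).toReal)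
    set n : ℕ := max N₁ N₂ with hn
    have e₁ : ‖ξ - Q n ξ‖ ≤ δ₁ := hdiff ξ n hδ₁ (h₁ n (le_max_left _ _))
    have e₂ : ‖A ξ - Q n (A ξ)‖ ≤ ε / 2 := hdiff (A ξ) n (half_pos hε) (h₂ n (le_max_right _ _))
    have hdec : A ξ = (Q n * A * Q n) ξ + (Q n) (A (ξ - Q n ξ)) + (A ξ - (Q n) (A ξ)) := by
      simp only [ContinuousLinearMap.mul_apply, map_sub]
      abel
    have hterm1 : ‖(Q n * A * Q n) ξ‖ ≤ ‖Pplus * A * Pplus‖ * ‖ξ‖ :=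
      le_trans ((Q n * A * Q n).le_opNorm ξ)
        (mul_le_mul_of_nonneg_right (hQAQnorm n) (norm_nonneg _))
    have hterm2 : ‖(Q n) (A (ξ - Q n ξ))‖ ≤ ε / 2 := by
      refine le_trans (hQnorm n _) (le_trans (A.le_opNorm _) ?_)
      have step : ‖A‖ * ‖ξ - Q n ξ‖ ≤ ‖A‖ * δ₁ :=
        mul_le_mul_of_nonneg_left e₁ (norm_nonneg _)
      have step2 : ‖A‖ * δ₁ ≤ (‖A‖ + 1) * δ₁ :=
        mul_le_mul_of_nonneg_right (by linarith) hδ₁.le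
      have step3 : (‖A‖ + 1) * δ₁ = ε / 2 := by
        rw [hδ₁def]
        field_simp
      linarith
    calc ‖A ξ‖ ≤ ‖(Q n * A * Q n) ξ‖ + ‖(Q n) (A (ξ - Q n ξ))‖ + ‖A ξ - (Q n) (A ξ)‖ := by
          conv_lhs => rw [hdec]
          exact norm_add₃_le
      _ ≤ ‖Pplus * A * Pplus‖ * ‖ξ‖ + ε / 2 + ε / 2 :=
          add_le_add (add_le_add hterm1 hterm2) e₂
      _ = ‖Pplus * A * Pplus‖ * ‖ξ‖ + ε := by ring
end

section
/- Let A₁,…,A_k be bounded operators on H and let p be a *-polynomial in k operator variables of degree d. Then for every integer m > d one has V*^m · p(Ψ⁺_{A₁},…,Ψ⁺_{A_k}) · V^m = P₊ · p(Ψ_{A₁},…,Ψ_{A_k}) · P₊ as operators on ℓ²(ℤ,H). (This is the operator-theoretic content of Observation 2 in the discrete case, where Ψ_{A_i} plays the role of ψ̃(e_i) = ψ(e_i)⊗U and Ψ⁺_{A_i} the role of ψ₊(e_i).) -/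
set_option linter.unusedSectionVars false
set_option maxHeartbeats 1000000

open MeasureTheory ContinuousLinearMap

/-- The signed shift of a word. -/
def wSum {k : ℕ} (w : List (Fin k × Bool)) : ℤ :=
  (w.map fun l => if l.2 then (-1 : ℤ) else 1).sum

lemma wSum_nil {k : ℕ} : wSum ([] : List (Fin k × Bool)) = 0 := rfl

lemma wSum_cons {k : ℕ} (l : Fin k × Bool) (w : List (Fin k × Bool)) :
    wSum (l :: w) = (if l.2 then (-1 : ℤ) else 1) + wSum w := by
  simp [wSum]

lemma wSum_bound {k : ℕ} (w : List (Fin k × Bool)) :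
    -(w.length : ℤ) ≤ wSum w ∧ wSum w ≤ (w.length : ℤ) := by
  induction w with
  | nil => simp [wSum]
  | cons hd t ih =>
      rw [wSum_cons]
      simp only [List.length_cons] at ih ⊢
      split_ifs <;> push_cast <;> omega

section Aux
variable {H : Type} [NormedAddCommGroup H] [InnerProductSpace ℂ H] [CompleteSpace H]
  {k : ℕ}

local notation "E₂" => lp (fun _ : ℤ => H) 2

lemma single_coord (n j : ℤ) (v : H) :
    (lp.single (E := fun _ : ℤ => H) 2 n v) j = if j = n then v else 0 := by
  rw [lp.single_apply]
  split_ifs with h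
  · subst h; exact Pi.single_eq_same _ _
  · exact Pi.single_eq_of_ne h _

lemma adjoint_coord (T : E₂ →L[ℂ] E₂) (ξ : E₂) (n : ℤ) (x : H)
    (hx : ∀ v : H, (inner ℂ x v : ℂ)
      = inner ℂ ξ (T (lp.single (E := fun _ : ℤ => H) 2 n v))) :
    (adjoint T ξ) n = x := by
  refine ext_inner_right ℂ fun v => ?_
  rw [← lp.inner_single_right, adjoint_inner_left]
  exact (hx v).symm

lemma adjP (Pplus : E₂ →L[ℂ] E₂)
    (hP : ∀ (ξ : E₂) (n : ℤ), (Pplus ξ) n = if 0 ≤ n then ξ n else 0) :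
    adjoint Pplus = Pplus := by
  refine ((eq_adjoint_iff Pplus Pplus).2 fun ξ η => ?_).symm
  rw [lp.inner_eq_tsum, lp.inner_eq_tsum]
  refine tsum_congr fun j => ?_
  rw [hP, hP]
  split_ifs with h
  · rfl
  · simp

lemma W_single (W : E₂ →L[ℂ] E₂)
    (hW : ∀ (ξ : E₂) (n : ℤ), (W ξ) n = ξ (n - 1)) (n : ℤ) (v : H) :
    W (lp.single (E := fun _ : ℤ => H) 2 n v)
      = lp.single (E := fun _ : ℤ => H) 2 (n + 1) v := by
  refine lp.ext (funext fun j => ?_)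
  rw [hW, single_coord, single_coord]
  split_ifs <;> first | rfl | omega

lemma adjW_coord (W : E₂ →L[ℂ] E₂)
    (hW : ∀ (ξ : E₂) (n : ℤ), (W ξ) n = ξ (n - 1)) (ξ : E₂) (n : ℤ) :
    (adjoint W ξ) n = ξ (n + 1) := by
  refine adjoint_coord W ξ n _ fun v => ?_
  rw [W_single W hW n v, lp.inner_single_right]

lemma Ψ_single (Ψ : (H →L[ℂ] H) → E₂ →L[ℂ] E₂)
    (hΨ : ∀ (B : H →L[ℂ] H) (ξ : E₂) (n : ℤ), (Ψ B ξ) n = B (ξ (n - 1)))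
    (B : H →L[ℂ] H) (n : ℤ) (v : H) :
    Ψ B (lp.single (E := fun _ : ℤ => H) 2 n v)
      = lp.single (E := fun _ : ℤ => H) 2 (n + 1) (B v) := by
  refine lp.ext (funext fun j => ?_)
  rw [hΨ, single_coord, single_coord, apply_ite B, map_zero]
  split_ifs <;> first | rfl | omega

lemma adjΨ_coord (Ψ : (H →L[ℂ] H) → E₂ →L[ℂ] E₂)
    (hΨ : ∀ (B : H →L[ℂ] H) (ξ : E₂) (n : ℤ), (Ψ B ξ) n = B (ξ (n - 1)))
    (B : H →L[ℂ] H) (ξ : E₂) (n : ℤ) :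
    (adjoint (Ψ B) ξ) n = adjoint B (ξ (n + 1)) := by
  refine adjoint_coord _ ξ n _ fun v => ?_
  rw [Ψ_single Ψ hΨ B n v, lp.inner_single_right, adjoint_inner_left]

lemma plusLetter_coord (Pplus : E₂ →L[ℂ] E₂)
    (hP : ∀ (ξ : E₂) (n : ℤ), (Pplus ξ) n = if 0 ≤ n then ξ n else 0)
    (Ψ : (H →L[ℂ] H) → E₂ →L[ℂ] E₂)
    (hΨ : ∀ (B : H →L[ℂ] H) (ξ : E₂) (n : ℤ), (Ψ B ξ) n = B (ξ (n - 1)))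
    (B : H →L[ℂ] H) (ξ : E₂) (n : ℤ) :
    ((Pplus * Ψ B * Pplus) ξ) n = if 1 ≤ n then B (ξ (n - 1)) else 0 := by
  rw [ContinuousLinearMap.mul_apply, ContinuousLinearMap.mul_apply, hP, hΨ, hP]
  split_ifs <;> first | rfl | omega | simp

lemma plusLetterAdj_coord (Pplus : E₂ →L[ℂ] E₂)
    (hP : ∀ (ξ : E₂) (n : ℤ), (Pplus ξ) n = if 0 ≤ n then ξ n else 0)
    (Ψ : (H →L[ℂ] H) → E₂ →L[ℂ] E₂)
    (hΨ : ∀ (B : H →L[ℂ] H) (ξ : E₂) (n : ℤ), (Ψ B ξ) n = B (ξ (n - 1)))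
    (B : H →L[ℂ] H) (ξ : E₂) (n : ℤ) :
    ((adjoint (Pplus * Ψ B * Pplus)) ξ) n
      = if 0 ≤ n then adjoint B (ξ (n + 1)) else 0 := by
  have hadj : adjoint (Pplus * Ψ B * Pplus) = Pplus * adjoint (Ψ B) * Pplus := by
    rw [← star_eq_adjoint]
    simp only [star_mul, star_eq_adjoint, adjP Pplus hP, mul_assoc]
  rw [hadj, ContinuousLinearMap.mul_apply, ContinuousLinearMap.mul_apply, hP, adjΨ_coord Ψ hΨ, hP]
  split_ifs <;> first | rfl | omega | simp

lemma V_coord (W Pplus : E₂ →L[ℂ] E₂)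
    (hW : ∀ (ξ : E₂) (n : ℤ), (W ξ) n = ξ (n - 1))
    (hP : ∀ (ξ : E₂) (n : ℤ), (Pplus ξ) n = if 0 ≤ n then ξ n else 0)
    (ξ : E₂) (n : ℤ) :
    ((Pplus * W * Pplus) ξ) n = if 1 ≤ n then ξ (n - 1) else 0 := by
  rw [ContinuousLinearMap.mul_apply, ContinuousLinearMap.mul_apply, hP, hW, hP]
  split_ifs <;> first | rfl | omega

lemma adjV_coord (W Pplus : E₂ →L[ℂ] E₂)
    (hW : ∀ (ξ : E₂) (n : ℤ), (W ξ) n = ξ (n - 1))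
    (hP : ∀ (ξ : E₂) (n : ℤ), (Pplus ξ) n = if 0 ≤ n then ξ n else 0)
    (ξ : E₂) (n : ℤ) :
    ((adjoint (Pplus * W * Pplus)) ξ) n = if 0 ≤ n then ξ (n + 1) else 0 := by
  have hadj : adjoint (Pplus * W * Pplus) = Pplus * adjoint W * Pplus := by
    rw [← star_eq_adjoint]
    simp only [star_mul, star_eq_adjoint, adjP Pplus hP, mul_assoc]
  rw [hadj, ContinuousLinearMap.mul_apply, ContinuousLinearMap.mul_apply, hP, adjW_coord W hW, hP]
  split_ifs <;> first | rfl | omega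

lemma Vpow_coord (W Pplus : E₂ →L[ℂ] E₂)
    (hW : ∀ (ξ : E₂) (n : ℤ), (W ξ) n = ξ (n - 1))
    (hP : ∀ (ξ : E₂) (n : ℤ), (Pplus ξ) n = if 0 ≤ n then ξ n else 0)
    (m : ℕ) (ξ : E₂) (n : ℤ) :
    (((Pplus * W * Pplus) ^ (m + 1)) ξ) n
      = if ((m + 1 : ℕ) : ℤ) ≤ n then ξ (n - (m + 1 : ℕ)) else 0 := by
  induction m generalizing n with
  | zero =>
      rw [pow_one, V_coord W Pplus hW hP]
      have h1 : ((0 + 1 : ℕ) : ℤ) = 1 := by norm_num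
      rw [h1]
  | succ m ih =>
      rw [pow_succ', ContinuousLinearMap.mul_apply, V_coord W Pplus hW hP, ih]
      have he : n - 1 - ((m + 1 : ℕ) : ℤ) = n - ((m + 1 + 1 : ℕ) : ℤ) := by
        push_cast; ring
      rw [he]
      split_ifs <;> first | rfl | (exfalso; omega)

lemma adjVpow_coord (W Pplus : E₂ →L[ℂ] E₂)
    (hW : ∀ (ξ : E₂) (n : ℤ), (W ξ) n = ξ (n - 1))
    (hP : ∀ (ξ : E₂) (n : ℤ), (Pplus ξ) n = if 0 ≤ n then ξ n else 0)
    (m : ℕ) (ξ : E₂) (n : ℤ) :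
    (((adjoint (Pplus * W * Pplus)) ^ (m + 1)) ξ) n
      = if 0 ≤ n then ξ (n + (m + 1 : ℕ)) else 0 := by
  induction m generalizing n with
  | zero =>
      rw [pow_one, adjV_coord W Pplus hW hP]
      have h1 : ((0 + 1 : ℕ) : ℤ) = 1 := by norm_num
      rw [h1]
  | succ m ih =>
      rw [pow_succ', ContinuousLinearMap.mul_apply, adjV_coord W Pplus hW hP, ih]
      have he : n + 1 + ((m + 1 : ℕ) : ℤ) = n + ((m + 1 + 1 : ℕ) : ℤ) := by
        push_cast; ring
      rw [he]
      split_ifs <;> first | rfl | (exfalso; omega)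

lemma wordΨ_coord (A : Fin k → H →L[ℂ] H)
    (Ψ : (H →L[ℂ] H) → E₂ →L[ℂ] E₂)
    (hΨ : ∀ (B : H →L[ℂ] H) (ξ : E₂) (n : ℤ), (Ψ B ξ) n = B (ξ (n - 1)))
    (w : List (Fin k × Bool)) (ξ : E₂) (n : ℤ) :
    (evalWord (fun i => Ψ (A i)) w ξ) n = evalWord A w (ξ (n - wSum w)) := by
  induction w generalizing n with
  | nil => simp [evalWord, wSum_nil]
  | cons hd t ih =>
      obtain ⟨i, b⟩ := hd
      cases b
      · simp only [evalWord, Bool.false_eq_true, if_false, ContinuousLinearMap.mul_apply]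
        rw [hΨ, ih, wSum_cons]
        simp only [Bool.false_eq_true, if_false]
        congr 2
        ring
      · simp only [evalWord, if_true, ContinuousLinearMap.mul_apply]
        rw [adjΨ_coord Ψ hΨ, ih, wSum_cons]
        simp only [if_true]
        congr 2
        ring

lemma wordPlus_coord (A : Fin k → H →L[ℂ] H) (Pplus : E₂ →L[ℂ] E₂)
    (hP : ∀ (ξ : E₂) (n : ℤ), (Pplus ξ) n = if 0 ≤ n then ξ n else 0)
    (Ψ : (H →L[ℂ] H) → E₂ →L[ℂ] E₂)
    (hΨ : ∀ (B : H →L[ℂ] H) (ξ : E₂) (n : ℤ), (Ψ B ξ) n = B (ξ (n - 1)))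
    (w : List (Fin k × Bool)) (c : ℤ) (ξ : E₂) (g : ℤ → H)
    (hξ : ∀ n, ξ n = if c ≤ n then g n else 0) :
    (w.length : ℤ) ≤ c → ∀ n : ℤ,
      (evalWord (fun i => Pplus * Ψ (A i) * Pplus) w ξ) n
        = if c + wSum w ≤ n then evalWord A w (g (n - wSum w)) else 0 := by
  induction w with
  | nil =>
      intro _ n
      simpa [evalWord, wSum_nil] using hξ n
  | cons hd t ih =>
      intro hc n
      obtain ⟨i, b⟩ := hd
      simp only [List.length_cons] at hc
      have hc' : (t.length : ℤ) ≤ c := by push_cast at hc ⊢; omega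
      have hb := wSum_bound t
      obtain ⟨hb1, hb2⟩ := hb
      have ih' := ih hc'
      push_cast at hc
      cases b
      · have hsc : wSum ((i, false) :: t) = 1 + wSum t := by simp [wSum_cons]
        simp only [evalWord, Bool.false_eq_true, if_false]
        rw [ContinuousLinearMap.mul_apply, plusLetter_coord Pplus hP Ψ hΨ, ih' (n - 1), hsc, ContinuousLinearMap.mul_apply]
        simp only [apply_ite (A i), map_zero]
        have he : n - 1 - wSum t = n - (1 + wSum t) := by ring
        rw [he]
        split_ifs <;> first | rfl | (exfalso; omega)
      · have hsc : wSum ((i, true) :: t) = -1 + wSum t := by simp [wSum_cons]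
        simp only [evalWord, if_true]
        rw [ContinuousLinearMap.mul_apply, plusLetterAdj_coord Pplus hP Ψ hΨ, ih' (n + 1), hsc, ContinuousLinearMap.mul_apply]
        simp only [apply_ite (adjoint (A i)), map_zero]
        have he : n + 1 - wSum t = n - (-1 + wSum t) := by ring
        rw [he]
        split_ifs <;> first | rfl | (exfalso; omega)

lemma wordEq (A : Fin k → H →L[ℂ] H) (W Pplus : E₂ →L[ℂ] E₂)
    (hW : ∀ (ξ : E₂) (n : ℤ), (W ξ) n = ξ (n - 1))
    (hP : ∀ (ξ : E₂) (n : ℤ), (Pplus ξ) n = if 0 ≤ n then ξ n else 0)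
    (Ψ : (H →L[ℂ] H) → E₂ →L[ℂ] E₂)
    (hΨ : ∀ (B : H →L[ℂ] H) (ξ : E₂) (n : ℤ), (Ψ B ξ) n = B (ξ (n - 1)))
    (w : List (Fin k × Bool)) (m : ℕ) (hm : w.length < m) :
    adjoint (Pplus * W * Pplus) ^ m * evalWord (fun i => Pplus * Ψ (A i) * Pplus) w *
        (Pplus * W * Pplus) ^ m
      = Pplus * evalWord (fun i => Ψ (A i)) w * Pplus := by
  obtain ⟨m, rfl⟩ : ∃ m', m = m' + 1 := ⟨m - 1, by omega⟩
  refine ContinuousLinearMap.ext fun ξ => lp.ext (funext fun n => ?_)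
  obtain ⟨hb1, hb2⟩ := wSum_bound w
  rw [ContinuousLinearMap.mul_apply, ContinuousLinearMap.mul_apply, ContinuousLinearMap.mul_apply, ContinuousLinearMap.mul_apply,
    adjVpow_coord W Pplus hW hP, hP, wordΨ_coord A Ψ hΨ, hP,
    wordPlus_coord A Pplus hP Ψ hΨ w ((m + 1 : ℕ) : ℤ) _
      (fun j => ξ (j - (m + 1 : ℕ)))
      (fun j => Vpow_coord W Pplus hW hP m ξ j) (by push_cast; omega)
      (n + (m + 1 : ℕ))]
  simp only [apply_ite (evalWord A w), map_zero]
  have he : n + ((m + 1 : ℕ) : ℤ) - wSum w - ((m + 1 : ℕ) : ℤ) = n - wSum w := by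
    ring
  rw [he]
  split_ifs <;> first | rfl | (exfalso; omega)

end Aux

/-- For bounded operators `A₁,…,A_k` on `H`, a *-polynomial `p` of degree `d`,
and any `m > d`, one has `V*^m · p(Ψ⁺_{A₁},…,Ψ⁺_{A_k}) · V^m = P₊ · p(Ψ_{A₁},…,Ψ_{A_k}) · P₊`
on `ℓ²(ℤ,H)`, where `(Ψ_A ξ)(n) = A(ξ(n−1))`, `Ψ⁺_A = P₊ Ψ_A P₊`, `V = P₊ W P₊` with `W`
the bilateral shift, and `P₊` the projection onto `{ξ : ξ(n) = 0 for n < 0}`. -/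
theorem stmt1 {H : Type} [NormedAddCommGroup H] [InnerProductSpace ℂ H] [CompleteSpace H]
    {k : ℕ} (A : Fin k → H →L[ℂ] H)
    (W Pplus : lp (fun _ : ℤ => H) 2 →L[ℂ] lp (fun _ : ℤ => H) 2)
    (hW : ∀ (ξ : lp (fun _ : ℤ => H) 2) (n : ℤ), (W ξ) n = ξ (n - 1))
    (hP : ∀ (ξ : lp (fun _ : ℤ => H) 2) (n : ℤ), (Pplus ξ) n = if 0 ≤ n then ξ n else 0)
    (Ψ : (H →L[ℂ] H) → lp (fun _ : ℤ => H) 2 →L[ℂ] lp (fun _ : ℤ => H) 2)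
    (hΨ : ∀ (B : H →L[ℂ] H) (ξ : lp (fun _ : ℤ => H) 2) (n : ℤ), (Ψ B ξ) n = B (ξ (n - 1)))
    (p : List (ℂ × List (Fin k × Bool))) (m : ℕ) (hm : polyDegree p < m) :
    (adjoint (Pplus * W * Pplus)) ^ m * evalPoly (fun i => Pplus * Ψ (A i) * Pplus) p *
        (Pplus * W * Pplus) ^ m =
      Pplus * evalPoly (fun i => Ψ (A i)) p * Pplus := by
  revert hm
  induction p with
  | nil =>
      intro _
      simp [evalPoly]
  | cons cw q ih =>
      intro hm
      have hdeg : polyDegree (cw :: q) = max cw.2.length (polyDegree q) := rfl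
      rw [hdeg] at hm
      have h1 : cw.2.length < m := lt_of_le_of_lt (le_max_left _ _) hm
      have h2 : polyDegree q < m := lt_of_le_of_lt (le_max_right _ _) hm
      have e1 : ∀ (T : Fin k → (lp (fun _ : ℤ => H) 2 →L[ℂ] lp (fun _ : ℤ => H) 2)),
          evalPoly T (cw :: q)
          = cw.1 • evalWord T cw.2 + evalPoly T q := by
        intro T
        simp [evalPoly]
      rw [e1, e1]
      simp only [mul_add, add_mul, mul_smul_comm, smul_mul_assoc]
      rw [wordEq A W Pplus hW hP Ψ hΨ cw.2 m h1, ih h2]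
end

section
/- Let A₁,…,A_k be bounded operators on H. For every *-polynomial p in k operator variables, ‖p(Ψ_{A₁},…,Ψ_{A_k})‖ ≤ ‖p(Ψ⁺_{A₁},…,Ψ⁺_{A_k})‖. (This is the corollary 'ψ₊ majorizes ψ̃' in the discrete case, obtained by combining the compression lemma ‖P₊ A P₊‖ = ‖A‖ for shift-commuting A with the identity V*^m p(Ψ⁺) V^m = P₊ p(Ψ) P₊.) -/
open MeasureTheory ContinuousLinearMap

local notation "⟪" x ", " y "⟫" => @inner ℂ _ _ x y

lemma length_le_polyDegree {k : ℕ} (p : List (ℂ × List (Fin k × Bool))) :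
    ∀ cw ∈ p, cw.2.length ≤ polyDegree p := by
  induction p with
  | nil => intro cw h; cases h
  | cons c q ih =>
    intro cw hcw
    unfold polyDegree
    simp only [List.map_cons, List.foldr_cons]
    rcases List.mem_cons.mp hcw with h | h
    · subst h; exact le_max_left _ _
    · exact le_trans (ih cw h) (le_max_right _ _)

namespace Stmt2Aux

variable {H : Type} [NormedAddCommGroup H] [InnerProductSpace ℂ H] [CompleteSpace H]

noncomputable abbrev E (H : Type) [NormedAddCommGroup H] [InnerProductSpace ℂ H] : Type :=
  lp (fun _ : ℤ => H) 2

lemma single_apply' (n j : ℤ) (x : H) : (lp.single 2 n x : E H) j = if j = n then x else 0 := by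
  by_cases h : j = n
  · subst h; simp [lp.single_apply_self]
  · simp [lp.single_apply_ne 2 n _ h, h]

lemma norm_sq_eq (f : E H) : ‖f‖ ^ (2:ℝ) = ∑' n, ‖f n‖ ^ (2:ℝ) := by
  have := lp.norm_rpow_eq_tsum (p := 2) (by norm_num) f
  simpa using this

lemma summable_norm_sq (f : E H) : Summable (fun n => ‖f n‖ ^ (2:ℝ)) := by
  have := lp.hasSum_norm (p := 2) (by norm_num) f
  simpa using this.summable

lemma norm_le_of_coords {f g : E H} (h : ∀ n, ‖f n‖ ≤ ‖g n‖) : ‖f‖ ≤ ‖g‖ := by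
  have h2 : ‖f‖ ^ (2:ℝ) ≤ ‖g‖ ^ (2:ℝ) := by
    rw [norm_sq_eq, norm_sq_eq]
    exact (summable_norm_sq f).tsum_le_tsum (fun n => Real.rpow_le_rpow (norm_nonneg _) (h n) (by norm_num))
      (summable_norm_sq g)
  rw [Real.rpow_two, Real.rpow_two] at h2
  nlinarith [norm_nonneg f, norm_nonneg g]

lemma norm_eq_of_coords {f g : E H} (m : ℤ) (h : ∀ n, f n = g (n - m)) : ‖f‖ = ‖g‖ := by
  have h2 : ‖f‖ ^ (2:ℝ) = ‖g‖ ^ (2:ℝ) := by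
    rw [norm_sq_eq, norm_sq_eq]
    calc ∑' n, ‖f n‖ ^ (2:ℝ) = ∑' n, ‖g (n - m)‖ ^ (2:ℝ) := by
          exact tsum_congr fun n => by rw [h n]
      _ = ∑' n, ‖g n‖ ^ (2:ℝ) := (Equiv.subRight m).tsum_eq fun n => ‖g n‖ ^ (2:ℝ)
  rw [Real.rpow_two, Real.rpow_two] at h2
  exact (sq_eq_sq₀ (norm_nonneg f) (norm_nonneg g)).mp h2

end Stmt2Aux

open Stmt2Aux


set_option maxHeartbeats 1600000 in
/-- For bounded operators `A₁,…,A_k` on `H` and every *-polynomial `p`,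
`‖p(Ψ_{A₁},…,Ψ_{A_k})‖ ≤ ‖p(Ψ⁺_{A₁},…,Ψ⁺_{A_k})‖`, where `(Ψ_A ξ)(n) = A(ξ(n−1))` on
`ℓ²(ℤ,H)`, `Ψ⁺_A = P₊ Ψ_A P₊`, and `P₊` projects onto `{ξ : ξ(n) = 0 for n < 0}`. -/
theorem stmt2 {H : Type} [NormedAddCommGroup H] [InnerProductSpace ℂ H] [CompleteSpace H]
    {k : ℕ} (A : Fin k → H →L[ℂ] H)
    (Pplus : lp (fun _ : ℤ => H) 2 →L[ℂ] lp (fun _ : ℤ => H) 2)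
    (hP : ∀ (ξ : lp (fun _ : ℤ => H) 2) (n : ℤ), (Pplus ξ) n = if 0 ≤ n then ξ n else 0)
    (Ψ : (H →L[ℂ] H) → lp (fun _ : ℤ => H) 2 →L[ℂ] lp (fun _ : ℤ => H) 2)
    (hΨ : ∀ (B : H →L[ℂ] H) (ξ : lp (fun _ : ℤ => H) 2) (n : ℤ), (Ψ B ξ) n = B (ξ (n - 1)))
    (p : List (ℂ × List (Fin k × Bool))) :
    ‖evalPoly (fun i => Ψ (A i)) p‖ ≤ ‖evalPoly (fun i => Pplus * Ψ (A i) * Pplus) p‖ := by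
  set T : Fin k → E H →L[ℂ] E H := fun i => Ψ (A i) with hT
  set Tp : Fin k → E H →L[ℂ] E H := fun i => Pplus * Ψ (A i) * Pplus with hTp
  set W : E H →L[ℂ] E H := Ψ 1 with hWdef
  have hWc : ∀ (ξ : E H) (n : ℤ), (W ξ) n = ξ (n - 1) := fun ξ n => by
    simpa using hΨ 1 ξ n
  -- coordinates of powers of W
  have hWpow : ∀ (m : ℕ) (ξ : E H) (n : ℤ), ((W ^ m) ξ) n = ξ (n - m) := by
    intro m
    induction m with
    | zero => intro ξ n; simp
    | succ m ih =>
      intro ξ n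
      have : W ^ (m + 1) = W ^ m * W := pow_succ W m
      rw [this, mul_apply_eq_comp, ih (W ξ) n, hWc ξ (n - m)]
      congr 1
      push_cast
      ring
  -- W^m is isometric
  have hWiso : ∀ (m : ℕ) (ξ : E H), ‖(W ^ m) ξ‖ = ‖ξ‖ := by
    intro m ξ
    exact norm_eq_of_coords (m : ℤ) (fun n => hWpow m ξ n)
  -- Pplus is a contraction
  have hPle : ∀ ξ : E H, ‖Pplus ξ‖ ≤ ‖ξ‖ := by
    intro ξ
    refine norm_le_of_coords fun n => ?_
    rw [hP]
    split_ifs <;> simp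
  -- Ψ B on singles
  have hΨsingle : ∀ (B : H →L[ℂ] H) (n : ℤ) (x : H),
      Ψ B (lp.single 2 n x) = lp.single 2 (n + 1) (B x) := by
    intro B n x
    apply lp.ext
    funext m
    rw [hΨ, single_apply', single_apply']
    by_cases h : m = n + 1
    · rw [if_pos h, if_pos (by omega)]
    · rw [if_neg h, if_neg (by omega), map_zero]
  -- coordinates of the adjoint of Ψ B
  have hadj : ∀ (B : H →L[ℂ] H) (η : E H) (n : ℤ),
      (adjoint (Ψ B) η) n = adjoint B (η (n + 1)) := by
    intro B η n
    apply ext_inner_left ℂ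
    intro x
    calc ⟪x, (adjoint (Ψ B) η) n⟫ = ⟪lp.single 2 n x, adjoint (Ψ B) η⟫ :=
          (lp.inner_single_left (𝕜 := ℂ) (G := fun _ : ℤ => H) n x (adjoint (Ψ B) η)).symm
      _ = ⟪Ψ B (lp.single 2 n x), η⟫ := adjoint_inner_right _ _ _
      _ = ⟪lp.single 2 (n + 1) (B x), η⟫ := by rw [hΨsingle]
      _ = ⟪B x, η (n + 1)⟫ := lp.inner_single_left _ _ _
      _ = ⟪x, adjoint B (η (n + 1))⟫ := (adjoint_inner_right _ _ _).symm
  -- Pplus is self-adjoint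
  have hPadj : adjoint Pplus = Pplus := by
    refine ((eq_adjoint_iff Pplus Pplus).mpr ?_).symm
    intro ξ η
    rw [lp.inner_eq_tsum, lp.inner_eq_tsum]
    refine tsum_congr fun n => ?_
    rw [hP, hP]
    split_ifs <;> simp
  -- commutation of letters with W
  have hcomm : ∀ B : H →L[ℂ] H, Ψ B * W = W * Ψ B := by
    intro B
    ext ξ n
    rw [mul_apply_eq_comp, mul_apply_eq_comp, hΨ, hWc, hWc, hΨ]
  have hcommadj : ∀ B : H →L[ℂ] H, adjoint (Ψ B) * W = W * adjoint (Ψ B) := by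
    intro B
    ext ξ n
    rw [mul_apply_eq_comp, mul_apply_eq_comp, hadj, hWc, hWc, hadj]
    have : n + 1 - 1 = n - 1 + 1 := by ring
    rw [this]
  -- words commute with W
  have hwordW : ∀ w : List (Fin k × Bool), evalWord T w * W = W * evalWord T w := by
    intro w
    induction w with
    | nil => simp [evalWord]
    | cons a w ih =>
      obtain ⟨i, b⟩ := a
      show ((if b then adjoint (T i) else T i) * evalWord T w) * W
          = W * ((if b then adjoint (T i) else T i) * evalWord T w)
      rw [mul_assoc, ih, ← mul_assoc, ← mul_assoc]
      congr 1
      cases b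
      · simpa using hcomm (A i)
      · simpa using hcommadj (A i)
  -- the polynomial commutes with W
  have hpolyW : ∀ (m : ℕ), evalPoly T p * W ^ m = W ^ m * evalPoly T p := by
    have h1 : evalPoly T p * W = W * evalPoly T p := by
      unfold evalPoly
      induction p with
      | nil => simp
      | cons cw p ih =>
        simp only [List.map_cons, List.sum_cons, add_mul, mul_add, smul_mul_assoc,
          mul_smul_comm, ih, hwordW cw.2]
    intro m
    induction m with
    | zero => simp
    | succ m ih =>
      rw [pow_succ, ← mul_assoc, ih, mul_assoc, h1, ← mul_assoc]
  -- support lemma for words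
  have hword : ∀ (w : List (Fin k × Bool)) (d : ℤ) (ξ : E H),
      (∀ n, n < d → ξ n = 0) → (w.length : ℤ) ≤ d →
      evalWord Tp w ξ = evalWord T w ξ ∧
        (∀ n, n < d - w.length → (evalWord T w ξ) n = 0) := by
    intro w
    induction w with
    | nil =>
      intro d ξ hsupp _
      refine ⟨rfl, fun n hn => ?_⟩
      simpa [evalWord] using hsupp n (by simpa using hn)
    | cons a w ih =>
      intro d ξ hsupp hlen
      obtain ⟨i, b⟩ := a
      have hlen' : (w.length : ℤ) ≤ d := by
        simp only [List.length_cons] at hlen; push_cast at hlen ⊢; omega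
      obtain ⟨heq, hsupp'⟩ := ih d ξ hsupp hlen'
      set η := evalWord T w ξ with hη
      have hd : (w.length : ℤ) + 1 ≤ d := by
        simp only [List.length_cons] at hlen; push_cast at hlen; omega
      have hPη : Pplus η = η := by
        apply lp.ext
        funext n
        rw [hP]
        split_ifs with h
        · rfl
        · exact (hsupp' n (by omega)).symm
      cases b
      · -- letter T i = Ψ (A i)
        have hPΨη : Pplus (Ψ (A i) η) = Ψ (A i) η := by
          apply lp.ext
          funext n
          rw [hP]
          split_ifs with h
          · rfl
          · rw [hΨ]
            rw [hsupp' (n - 1) (by omega), map_zero]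
        constructor
        · show (Tp i * evalWord Tp w) ξ = (T i * evalWord T w) ξ
          rw [mul_apply_eq_comp, mul_apply_eq_comp, heq]
          show (Pplus * Ψ (A i) * Pplus) η = Ψ (A i) η
          simp only [mul_apply_eq_comp]
          rw [hPη, hPΨη]
        · intro n hn
          show ((T i * evalWord T w) ξ) n = 0
          rw [mul_apply_eq_comp]
          show (Ψ (A i) η) n = 0
          rw [hΨ]
          rw [hsupp' (n - 1) (by simp only [List.length_cons] at hn; push_cast at hn ⊢; omega),
            map_zero]
      · -- letter adjoint (T i)
        have hTpadj : adjoint (Tp i) = Pplus * adjoint (Ψ (A i)) * Pplus := by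
          rw [hTp]
          simp only [mul_def]
          rw [adjoint_comp, adjoint_comp, hPadj]
          rfl
        have hPadjη : Pplus (adjoint (Ψ (A i)) η) = adjoint (Ψ (A i)) η := by
          apply lp.ext
          funext n
          rw [hP]
          split_ifs with h
          · rfl
          · rw [hadj]
            rw [hsupp' (n + 1) (by omega), map_zero]
        constructor
        · show (adjoint (Tp i) * evalWord Tp w) ξ = (adjoint (T i) * evalWord T w) ξ
          rw [mul_apply_eq_comp, mul_apply_eq_comp, heq, hTpadj]
          show (Pplus * adjoint (Ψ (A i)) * Pplus) η = adjoint (T i) η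
          show (Pplus * adjoint (Ψ (A i)) * Pplus) η = adjoint (Ψ (A i)) η
          simp only [mul_apply_eq_comp]
          rw [hPη, hPadjη]
        · intro n hn
          show ((adjoint (T i) * evalWord T w) ξ) n = 0
          rw [mul_apply_eq_comp]
          show (adjoint (Ψ (A i)) η) n = 0
          rw [hadj]
          rw [hsupp' (n + 1) (by simp only [List.length_cons] at hn; push_cast at hn ⊢; omega),
            map_zero]
  -- the polynomial agrees on vectors supported in [polyDegree p, inf)
  have hpoly' : ∀ q : List (ℂ × List (Fin k × Bool)),
      (∀ cw ∈ q, (cw.2.length : ℤ) ≤ (polyDegree p : ℤ)) →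
      ∀ ξ : E H, (∀ n, n < (polyDegree p : ℤ) → ξ n = 0) →
      evalPoly Tp q ξ = evalPoly T q ξ := by
    intro q
    induction q with
    | nil => intro _ ξ _; rfl
    | cons cw q ih =>
      intro hq ξ hsupp
      have h1 : evalPoly Tp (cw :: q) = cw.1 • evalWord Tp cw.2 + evalPoly Tp q := by
        unfold evalPoly; simp [List.map_cons, List.sum_cons]
      have h2 : evalPoly T (cw :: q) = cw.1 • evalWord T cw.2 + evalPoly T q := by
        unfold evalPoly; simp [List.map_cons, List.sum_cons]
      rw [h1, h2, add_apply, add_apply, smul_apply, smul_apply]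
      rw [(hword cw.2 (polyDegree p : ℤ) ξ hsupp (hq cw (List.mem_cons_self))).1]
      rw [ih (fun c hc => hq c (List.mem_cons_of_mem _ hc)) ξ hsupp]
  have hpoly : ∀ ξ : E H, (∀ n, n < (polyDegree p : ℤ) → ξ n = 0) →
      evalPoly Tp p ξ = evalPoly T p ξ := by
    intro ξ hsupp
    refine hpoly' p (fun cw hcw => ?_) ξ hsupp
    exact_mod_cast length_le_polyDegree p cw hcw
  -- key estimate for vectors with support bounded below
  have key : ∀ ξ : E H, (∃ N : ℤ, ∀ n, n < N → ξ n = 0) →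
      ‖evalPoly T p ξ‖ ≤ ‖evalPoly Tp p‖ * ‖ξ‖ := by
    rintro ξ ⟨N, hN⟩
    set d : ℤ := (polyDegree p : ℤ) with hd
    set m : ℕ := (d - N).toNat with hm
    have hm' : d - N ≤ (m : ℤ) := Int.self_le_toNat _
    set ζ : E H := (W ^ m) ξ with hζ
    have hζsupp : ∀ n, n < d → ζ n = 0 := by
      intro n hn
      rw [hζ, hWpow]
      exact hN _ (by omega)
    have e1 : ‖evalPoly T p ξ‖ = ‖evalPoly T p ζ‖ := by
      have := congrArg (fun X => X ξ) (hpolyW m)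
      simp only [mul_apply_eq_comp] at this
      rw [hζ, this, hWiso]
    have e2 : evalPoly T p ζ = evalPoly Tp p ζ := (hpoly ζ hζsupp).symm
    calc ‖evalPoly T p ξ‖ = ‖evalPoly Tp p ζ‖ := by rw [e1, e2]
      _ ≤ ‖evalPoly Tp p‖ * ‖ζ‖ := le_opNorm _ _
      _ = ‖evalPoly Tp p‖ * ‖ξ‖ := by rw [hζ, hWiso]
  -- the set of vectors with support bounded below is dense
  have hdense : Dense {ξ : E H | ∃ N : ℤ, ∀ n, n < N → ξ n = 0} := by
    intro ξ
    have hsum : HasSum (fun i : ℤ => lp.single 2 i (ξ i)) ξ := lp.hasSum_single (by norm_num) ξ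
    refine mem_closure_of_tendsto hsum (Filter.Eventually.of_forall ?_)
    intro s
    by_cases hs : s.Nonempty
    · refine ⟨s.min' hs, fun n hn => ?_⟩
      rw [lp.coeFn_sum]
      simp only [Finset.sum_apply]
      refine Finset.sum_eq_zero fun i hi => ?_
      rw [single_apply']
      rw [if_neg]
      intro hni
      exact absurd (s.min'_le i hi) (by omega)
    · rw [Finset.not_nonempty_iff_eq_empty] at hs
      exact ⟨0, fun n _ => by simp [hs]⟩
  -- conclude by density
  refine opNorm_le_bound _ (norm_nonneg _) ?_
  intro ξ
  have hclosed : IsClosed {ξ : E H | ‖evalPoly T p ξ‖ ≤ ‖evalPoly Tp p‖ * ‖ξ‖} :=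
    isClosed_le ((evalPoly T p).continuous.norm) (continuous_const.mul continuous_norm)
  have hsub : {ξ : E H | ∃ N : ℤ, ∀ n, n < N → ξ n = 0} ⊆
      {ξ : E H | ‖evalPoly T p ξ‖ ≤ ‖evalPoly Tp p‖ * ‖ξ‖} := fun ξ hξ => key ξ hξ
  have := closure_minimal hsub hclosed
  rw [hdense.closure_eq] at this
  exact this (Set.mem_univ ξ)
end

section
/- Let A₁,…,A_k be bounded operators on H. For every *-polynomial p in k operator variables, ‖p(A₁,…,A_k)‖ ≤ ‖p(Ψ⁺_{A₁},…,Ψ⁺_{A_k})‖. (This is the combined inequality 'ψ₊ majorizes ψ' which is the key step in the paper's new proof of Pimsner's theorem: it follows by transitivity from ψ₊ ≻ ψ̃ and ψ̃ ≻ ψ.) -/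
set_option linter.unusedSectionVars false


open MeasureTheory ContinuousLinearMap
open scoped ENNReal

namespace Stmt4Aux

/-- Net shift of a word: each unstarred letter shifts up by 1, each starred down by 1. -/
def wshift {k : ℕ} : List (Fin k × Bool) → ℤ
  | [] => 0
  | (_, b) :: w => (if b then (-1 : ℤ) else 1) + wshift w

lemma wshift_bounds {k : ℕ} : ∀ w : List (Fin k × Bool),
    -(w.length : ℤ) ≤ wshift w ∧ wshift w ≤ (w.length : ℤ)
  | [] => by simp [wshift]
  | (i, b) :: w => by
    obtain ⟨h1, h2⟩ := wshift_bounds w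
    cases b <;> simp only [wshift, List.length_cons] <;> push_cast <;> omega

lemma length_le_polyDegree {k : ℕ} (p : List (ℂ × List (Fin k × Bool))) :
    ∀ cw ∈ p, cw.2.length ≤ polyDegree p := by
  induction p with
  | nil => simp
  | cons c q ih =>
    intro cw hcw
    have hdeg : polyDegree (c :: q) = max c.2.length (polyDegree q) := rfl
    rcases List.mem_cons.mp hcw with h | h
    · subst h; rw [hdeg]; exact le_max_left _ _
    · rw [hdeg]; exact le_trans (ih cw h) (le_max_right _ _)

variable {H : Type} [NormedAddCommGroup H] [InnerProductSpace ℂ H] [CompleteSpace H]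

lemma single_coord (m : ℤ) (v : H) (j : ℤ) :
    (lp.single 2 m v : (lp (fun _ : ℤ => H) 2)) j = if j = m then v else 0 := by
  by_cases hj : j = m
  · subst hj; simp [lp.single_apply_self]
  · simp [lp.single_apply_ne _ _ _ hj, hj]

lemma listSum_coord (l : List (lp (fun _ : ℤ => H) 2)) (m : ℤ) :
    (l.sum : lp (fun _ : ℤ => H) 2) m
      = (l.map fun f : lp (fun _ : ℤ => H) 2 => f m).sum := by
  induction l with
  | nil => simp [lp.coeFn_zero]
  | cons a l ih =>
    rw [List.sum_cons, List.map_cons, List.sum_cons, lp.coeFn_add, Pi.add_apply, ih]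

lemma evalPoly_apply {k : ℕ} {E : Type} [NormedAddCommGroup E] [InnerProductSpace ℂ E]
    [CompleteSpace E] (T : Fin k → E →L[ℂ] E) (q : List (ℂ × List (Fin k × Bool))) (x : E) :
    evalPoly T q x = (q.map fun cw => cw.1 • (evalWord T cw.2 x)).sum := by
  induction q with
  | nil => simp [evalPoly]
  | cons c q ih =>
    simp only [evalPoly, List.map_cons, List.sum_cons, add_apply, smul_apply] at *
    rw [ih]

section Ops

variable (Pplus : (lp (fun _ : ℤ => H) 2) →L[ℂ] (lp (fun _ : ℤ => H) 2))
    (Ψ : (H →L[ℂ] H) → (lp (fun _ : ℤ => H) 2) →L[ℂ] (lp (fun _ : ℤ => H) 2))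

lemma Phi_single
    (hP : ∀ (ξ : (lp (fun _ : ℤ => H) 2)) (n : ℤ), (Pplus ξ) n = if 0 ≤ n then ξ n else 0)
    (hΨ : ∀ (B : H →L[ℂ] H) (ξ : (lp (fun _ : ℤ => H) 2)) (n : ℤ), (Ψ B ξ) n = B (ξ (n - 1))) (B : H →L[ℂ] H) (m : ℤ) (hm : 0 ≤ m) (v : H) :
    (Pplus * Ψ B * Pplus) (lp.single 2 m v) = lp.single 2 (m + 1) (B v) := by
  apply lp.ext
  funext n
  rw [ContinuousLinearMap.mul_apply, ContinuousLinearMap.mul_apply, hP, hΨ, hP, single_coord, single_coord]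
  split_ifs <;> first | rfl | (exfalso; omega) | simp

lemma Phi_adj_single
    (hP : ∀ (ξ : (lp (fun _ : ℤ => H) 2)) (n : ℤ), (Pplus ξ) n = if 0 ≤ n then ξ n else 0)
    (hΨ : ∀ (B : H →L[ℂ] H) (ξ : (lp (fun _ : ℤ => H) 2)) (n : ℤ), (Ψ B ξ) n = B (ξ (n - 1)))
    (B : H →L[ℂ] H) (m : ℤ) (hm : 1 ≤ m) (v : H) :
    adjoint (Pplus * Ψ B * Pplus) (lp.single 2 m v) = lp.single 2 (m - 1) (adjoint B v) := by
  apply ext_inner_right ℂ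
  intro x
  rw [adjoint_inner_left, lp.inner_single_left, lp.inner_single_left]
  rw [ContinuousLinearMap.mul_apply, ContinuousLinearMap.mul_apply, hP, hΨ, hP]
  rw [if_pos (by omega : (0:ℤ) ≤ m), if_pos (by omega : (0:ℤ) ≤ m - 1)]
  exact (adjoint_inner_left B _ v).symm

lemma word_single
    (hP : ∀ (ξ : (lp (fun _ : ℤ => H) 2)) (n : ℤ), (Pplus ξ) n = if 0 ≤ n then ξ n else 0)
    (hΨ : ∀ (B : H →L[ℂ] H) (ξ : (lp (fun _ : ℤ => H) 2)) (n : ℤ), (Ψ B ξ) n = B (ξ (n - 1)))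
    {k : ℕ} (A : Fin k → H →L[ℂ] H) (w : List (Fin k × Bool)) (n : ℤ)
    (hn : (w.length : ℤ) ≤ n) (v : H) :
    evalWord (fun i => Pplus * Ψ (A i) * Pplus) w (lp.single 2 n v)
      = lp.single 2 (n + wshift w) (evalWord A w v) := by
  induction w with
  | nil => simp [evalWord, wshift]
  | cons ib w ih =>
    obtain ⟨i, b⟩ := ib
    have hlen : (w.length : ℤ) ≤ n := by
      simp only [List.length_cons] at hn; push_cast at hn ⊢; omega
    have hlow : 1 ≤ n + wshift w := by
      have := (wshift_bounds w).1
      simp only [List.length_cons] at hn; push_cast at hn; omega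
    have hA : evalWord A ((i, b) :: w) v
        = (if b then adjoint (A i) else A i) (evalWord A w v) := by
      cases b <;> simp [evalWord, mul_apply]
    have hΦ : evalWord (fun i => Pplus * Ψ (A i) * Pplus) ((i, b) :: w) (lp.single 2 n v)
        = (if b then adjoint (Pplus * Ψ (A i) * Pplus) else Pplus * Ψ (A i) * Pplus)
            (evalWord (fun i => Pplus * Ψ (A i) * Pplus) w (lp.single 2 n v)) := by
      cases b <;> simp [evalWord, mul_apply]
    rw [hΦ, ih hlen, hA]
    cases b
    · rw [if_neg Bool.false_ne_true, if_neg Bool.false_ne_true]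
      rw [Phi_single Pplus Ψ hP hΨ _ _ (by omega) _]
      congr 1
      simp [wshift]; ring
    · rw [if_pos rfl, if_pos rfl]
      rw [Phi_adj_single Pplus Ψ hP hΨ _ _ hlow _]
      congr 1
      simp [wshift]; ring

end Ops

end Stmt4Aux

/-- For bounded operators `A₁,…,A_k` on `H` and every *-polynomial `p`,
`‖p(A₁,…,A_k)‖ ≤ ‖p(Ψ⁺_{A₁},…,Ψ⁺_{A_k})‖`, where `(Ψ_A ξ)(n) = A(ξ(n−1))` on `ℓ²(ℤ,H)`,
`Ψ⁺_A = P₊ Ψ_A P₊`, and `P₊` projects onto `{ξ : ξ(n) = 0 for n < 0}`. -/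
theorem stmt4 {H : Type} [NormedAddCommGroup H] [InnerProductSpace ℂ H] [CompleteSpace H]
    {k : ℕ} (A : Fin k → H →L[ℂ] H)
    (Pplus : lp (fun _ : ℤ => H) 2 →L[ℂ] lp (fun _ : ℤ => H) 2)
    (hP : ∀ (ξ : lp (fun _ : ℤ => H) 2) (n : ℤ), (Pplus ξ) n = if 0 ≤ n then ξ n else 0)
    (Ψ : (H →L[ℂ] H) → lp (fun _ : ℤ => H) 2 →L[ℂ] lp (fun _ : ℤ => H) 2)
    (hΨ : ∀ (B : H →L[ℂ] H) (ξ : lp (fun _ : ℤ => H) 2) (n : ℤ), (Ψ B ξ) n = B (ξ (n - 1)))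
    (p : List (ℂ × List (Fin k × Bool))) :
    ‖evalPoly A p‖ ≤ ‖evalPoly (fun i => Pplus * Ψ (A i) * Pplus) p‖ := by
  classical
  set Φ : Fin k → lp (fun _ : ℤ => H) 2 →L[ℂ] lp (fun _ : ℤ => H) 2 :=
    fun i => Pplus * Ψ (A i) * Pplus with hΦdef
  set D : ℕ := polyDegree p with hDdef
  have hp2 : (0:ℝ) < (2 : ℝ≥0∞).toReal := by rw [ENNReal.toReal_ofNat]; norm_num
  have h2 : ((2 : ℝ≥0∞)).toReal = (2 : ℝ) := by rw [ENNReal.toReal_ofNat]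
  have hrpow : ∀ x : ℝ, x ^ ((2 : ℝ≥0∞)).toReal = x ^ 2 := fun x => by
    rw [h2, Real.rpow_two]
  refine opNorm_le_bound _ (norm_nonneg _) fun h => ?_
  -- key inequality for each M
  have key : ∀ M : ℕ, (M : ℝ) * ‖evalPoly A p h‖ ^ 2
      ≤ ‖evalPoly Φ p‖ ^ 2 * ‖h‖ ^ 2 * ((2 * D + M : ℕ) : ℝ) := by
    intro M
    set N : ℕ := 2 * D + M with hNdef
    set η : lp (fun _ : ℤ => H) 2 :=
      ∑ j ∈ Finset.range N, lp.single 2 ((D : ℤ) + j) h with hηdef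
    -- norm of η
    have hηnorm : ‖η‖ ^ 2 = (N : ℝ) * ‖h‖ ^ 2 := by
      have hinj : Set.InjOn (fun j : ℕ => (D : ℤ) + j) (Finset.range N) := by
        intro a _ b _ hab; simpa using hab
      have hη' : η = ∑ i ∈ (Finset.range N).image (fun j : ℕ => (D : ℤ) + j),
          lp.single 2 i ((fun _ : ℤ => h) i) := by
        rw [Finset.sum_image (fun a ha b hb => hinj ha hb)]
      have := lp.norm_sum_single hp2 (fun _ : ℤ => h)
        ((Finset.range N).image (fun j : ℕ => (D : ℤ) + j))
      rw [← hη'] at this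
      rw [hrpow] at this
      rw [this]
      rw [Finset.sum_congr rfl (fun i _ => hrpow ‖h‖)]
      rw [Finset.sum_const, Finset.card_image_of_injOn hinj, Finset.card_range,
        nsmul_eq_mul]
    -- coordinates of evalPoly Φ p η in the middle range
    have hword : ∀ w : List (Fin k × Bool), w.length ≤ D → ∀ t : ℕ, t < M →
        (evalWord Φ w η : ∀ _ : ℤ, H) ((2 * D : ℤ) + t) = evalWord A w h := by
      intro w hw t ht
      have hsum : evalWord Φ w η
          = ∑ j ∈ Finset.range N, lp.single 2 ((D : ℤ) + j + Stmt4Aux.wshift w)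
              (evalWord A w h) := by
        rw [hηdef, map_sum]
        refine Finset.sum_congr rfl fun j _ => ?_
        rw [Stmt4Aux.word_single Pplus Ψ hP hΨ A w _ (by push_cast; omega) h]
      have hs1 := (Stmt4Aux.wshift_bounds w).1
      have hs2 := (Stmt4Aux.wshift_bounds w).2
      have hwD : (w.length : ℤ) ≤ (D : ℤ) := by exact_mod_cast hw
      set j₀ : ℕ := ((D : ℤ) + t - Stmt4Aux.wshift w).toNat with hj₀def
      have hj₀ : (j₀ : ℤ) = (D : ℤ) + t - Stmt4Aux.wshift w := by
        rw [hj₀def, Int.toNat_of_nonneg (by omega)]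
      have hj₀mem : j₀ ∈ Finset.range N := by
        rw [Finset.mem_range]
        have : (j₀ : ℤ) < (N : ℤ) := by rw [hj₀, hNdef]; push_cast; omega
        exact_mod_cast this
      rw [hsum, lp.coeFn_sum, Finset.sum_apply]
      rw [Finset.sum_eq_single_of_mem j₀ hj₀mem ?side]
      · rw [Stmt4Aux.single_coord, if_pos (by rw [hj₀]; ring)]
      · intro j _ hj
        rw [Stmt4Aux.single_coord, if_neg ?_]
        intro heq
        apply hj
        have : (j : ℤ) = (j₀ : ℤ) := by rw [hj₀]; omega
        exact_mod_cast this
    have hcoord : ∀ t : ℕ, t < M →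
        (evalPoly Φ p η : ∀ _ : ℤ, H) ((2 * D : ℤ) + t) = evalPoly A p h := by
      intro t ht
      rw [Stmt4Aux.evalPoly_apply, Stmt4Aux.evalPoly_apply, Stmt4Aux.listSum_coord,
        List.map_map]
      congr 1
      refine List.map_congr_left fun cw hcw => ?_
      simp only [Function.comp]
      rw [lp.coeFn_smul, Pi.smul_apply,
        hword cw.2 (Stmt4Aux.length_le_polyDegree p cw hcw) t ht]
    -- lower bound for ‖evalPoly Φ p η‖²
    have hinj2 : Set.InjOn (fun t : ℕ => (2 * D : ℤ) + t) (Finset.range M) := by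
      intro a _ b _ hab; simpa using hab
    have hlow : (M : ℝ) * ‖evalPoly A p h‖ ^ 2 ≤ ‖evalPoly Φ p η‖ ^ 2 := by
      have hsum := lp.sum_rpow_le_norm_rpow hp2 (evalPoly Φ p η)
        ((Finset.range M).image (fun t : ℕ => (2 * D : ℤ) + t))
      rw [hrpow] at hsum
      refine le_trans (le_of_eq ?_) hsum
      rw [Finset.sum_image (fun a ha b hb => hinj2 ha hb)]
      rw [Finset.sum_congr rfl (fun t htm => ?_), Finset.sum_const, Finset.card_range,
        nsmul_eq_mul]
      rw [hrpow, hcoord t (Finset.mem_range.mp htm)]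
    -- upper bound
    have hup : ‖evalPoly Φ p η‖ ^ 2 ≤ ‖evalPoly Φ p‖ ^ 2 * ‖h‖ ^ 2 * (N : ℝ) := by
      have h1 : ‖evalPoly Φ p η‖ ≤ ‖evalPoly Φ p‖ * ‖η‖ := le_opNorm _ _
      have h2' : ‖evalPoly Φ p η‖ ^ 2 ≤ (‖evalPoly Φ p‖ * ‖η‖) ^ 2 :=
        pow_le_pow_left₀ (norm_nonneg _) h1 2
      calc ‖evalPoly Φ p η‖ ^ 2 ≤ (‖evalPoly Φ p‖ * ‖η‖) ^ 2 := h2'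
        _ = ‖evalPoly Φ p‖ ^ 2 * ‖η‖ ^ 2 := by ring
        _ = ‖evalPoly Φ p‖ ^ 2 * ((N : ℝ) * ‖h‖ ^ 2) := by rw [hηnorm]
        _ = ‖evalPoly Φ p‖ ^ 2 * ‖h‖ ^ 2 * (N : ℝ) := by ring
    exact le_trans hlow hup
  -- take the limit M → ∞
  set a : ℝ := ‖evalPoly A p h‖ ^ 2 with hadef
  set C : ℝ := ‖evalPoly Φ p‖ ^ 2 * ‖h‖ ^ 2 with hCdef
  have hC0 : 0 ≤ C := by positivity
  have ha0 : 0 ≤ a := by positivity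
  have haC : a ≤ C := by
    have htend : Filter.Tendsto (fun M : ℕ => C * (2 * D) / M + C) Filter.atTop (nhds C) := by
      have := (tendsto_const_div_atTop_nhds_zero_nat (C * (2 * D))).add_const C
      simpa using this
    refine ge_of_tendsto htend ?_
    filter_upwards [Filter.eventually_ge_atTop 1] with M hM
    have hk := key M
    have hM0 : (0 : ℝ) < M := by exact_mod_cast hM
    have h1 : a ≤ C * ((2 * D + M : ℕ) : ℝ) / M := by
      rw [le_div_iff₀ hM0, mul_comm a (M:ℝ)]
      exact hk
    calc a ≤ C * ((2 * D + M : ℕ) : ℝ) / M := h1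
      _ = C * (2 * D) / M + C := by push_cast; field_simp
  have : ‖evalPoly A p h‖ ^ 2 ≤ (‖evalPoly Φ p‖ * ‖h‖) ^ 2 := by
    rw [mul_pow]; exact haC
  exact le_of_pow_le_pow_left₀ two_ne_zero (by positivity) this
end

section
/- Let A be a bounded operator on L²(ℝ,H) which commutes with the translation operator τ_y for every y ∈ ℝ. Then ‖P₊ A P₊‖ = ‖A‖. (This is the continuous analogue, Lemma 3.10 of the paper, of the discrete compression lemma; it is proved using the projections onto L²([a,∞),H), which tend strongly to 1 as a → −∞.) -/
open MeasureTheory ContinuousLinearMap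

set_option synthInstance.maxHeartbeats 1000000 in
set_option maxHeartbeats 2000000 in
/-- If a bounded operator `A` on `L²(ℝ,H)` commutes with every translation
`τ_y`, `(τ_y ξ)(t) = ξ(t−y)`, then `‖P₊ A P₊‖ = ‖A‖`, where `P₊` is the orthogonal
projection onto `{ξ : ξ(t) = 0 for a.e. t < 0}`. -/
theorem stmt7 {H : Type} [NormedAddCommGroup H] [InnerProductSpace ℂ H] [CompleteSpace H]
    (τ : ℝ → Lp H 2 (volume : Measure ℝ) →L[ℂ] Lp H 2 (volume : Measure ℝ))
    (hτ : ∀ (y : ℝ) (ξ : Lp H 2 (volume : Measure ℝ)),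
      (τ y ξ : ℝ → H) =ᵐ[volume] fun t => ξ (t - y))
    (Pplus : Lp H 2 (volume : Measure ℝ) →L[ℂ] Lp H 2 (volume : Measure ℝ))
    (hP : ∀ ξ : Lp H 2 (volume : Measure ℝ),
      (Pplus ξ : ℝ → H) =ᵐ[volume] fun t => if 0 ≤ t then ξ t else 0)
    (A : Lp H 2 (volume : Measure ℝ) →L[ℂ] Lp H 2 (volume : Measure ℝ))
    (hcomm : ∀ y : ℝ, A * τ y = τ y * A) :
    ‖Pplus * A * Pplus‖ = ‖A‖ := by
  classical
  -- τ y is isometric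
  have hτn : ∀ (y : ℝ) (ξ : Lp H 2 (volume : Measure ℝ)), ‖τ y ξ‖ = ‖ξ‖ := by
    intro y ξ
    have hmp : MeasurePreserving (fun t : ℝ => t - y) volume volume := by
      simpa [sub_eq_add_neg] using measurePreserving_add_right (volume : Measure ℝ) (-y)
    rw [Lp.norm_def, Lp.norm_def, eLpNorm_congr_ae (hτ y ξ)]
    congr 1
    exact eLpNorm_comp_measurePreserving (Lp.aestronglyMeasurable ξ) hmp
  -- Pplus is a contraction
  have hPn : ∀ ξ : Lp H 2 (volume : Measure ℝ), ‖Pplus ξ‖ ≤ ‖ξ‖ := by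
    intro ξ
    rw [Lp.norm_def, Lp.norm_def, eLpNorm_congr_ae (hP ξ)]
    refine ENNReal.toReal_mono (Lp.eLpNorm_ne_top ξ) ?_
    refine eLpNorm_mono fun t => ?_
    by_cases ht : 0 ≤ t <;> simp [ht]
  -- the key norm computation
  have hkey : ∀ (η : Lp H 2 (volume : Measure ℝ)) (y : ℝ),
      ‖Pplus (τ y η) - τ y η‖
        = (eLpNorm (η : ℝ → H) 2 (volume.restrict (Set.Iio (-y)))).toReal := by
    intro η y
    rw [Lp.norm_def]
    congr 1
    have hae : ((Pplus (τ y η) : ℝ → H) - (τ y η : ℝ → H))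
        =ᵐ[volume] (Set.Iio (0:ℝ)).indicator (fun t => -((η : ℝ → H) (t - y))) := by
      filter_upwards [hP (τ y η), hτ y η] with t h2 h3
      simp only [Pi.sub_apply]
      rw [h2, h3]
      by_cases ht : 0 ≤ t
      · simp [ht, Set.indicator, not_lt.mpr ht]
      · simp [ht, Set.indicator, lt_of_not_ge ht]
    rw [eLpNorm_congr_ae (Lp.coeFn_sub (Pplus (τ y η)) (τ y η)), eLpNorm_congr_ae hae,
      eLpNorm_indicator_eq_eLpNorm_restrict measurableSet_Iio]
    have hneg : eLpNorm (fun t : ℝ => -((η : ℝ → H) (t - y))) 2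
          (volume.restrict (Set.Iio (0:ℝ)))
        = eLpNorm (fun t : ℝ => (η : ℝ → H) (t - y)) 2 (volume.restrict (Set.Iio (0:ℝ))) :=
      eLpNorm_neg _ _ _
    rw [hneg]
    have hmp : MeasurePreserving (fun t : ℝ => t - y) (volume.restrict (Set.Iio (0:ℝ)))
        (volume.restrict (Set.Iio (-y))) := by
      have hmp0 : MeasurePreserving (fun t : ℝ => t - y) volume volume := by
        simpa [sub_eq_add_neg] using measurePreserving_add_right (volume : Measure ℝ) (-y)
      have h := hmp0.restrict_preimage (s := Set.Iio (-y)) measurableSet_Iio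
      have hpre : (fun t : ℝ => t - y) ⁻¹' Set.Iio (-y) = Set.Iio 0 := by
        ext t; simp [sub_lt_iff_lt_add]
      rwa [hpre] at h
    exact eLpNorm_comp_measurePreserving ((Lp.aestronglyMeasurable η).restrict) hmp
  -- the tail of the L² norm vanishes
  have htail : ∀ η : Lp H 2 (volume : Measure ℝ),
      Filter.Tendsto (fun a : ℝ => (eLpNorm (η : ℝ → H) 2 (volume.restrict (Set.Iio a))).toReal)
        Filter.atBot (nhds 0) := by
    intro η
    set ν : Measure ℝ :=
      volume.withDensity (fun x => (‖(η : ℝ → H) x‖₊ : ENNReal) ^ (2:ℝ)) with hν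
    have hmeas : ∀ a : ℝ,
        (∫⁻ x in Set.Iio a, (‖(η : ℝ → H) x‖₊ : ENNReal) ^ (2:ℝ) ∂volume) = ν (Set.Iio a) := by
      intro a
      rw [hν, withDensity_apply _ measurableSet_Iio]
    have hfin : ν Set.univ ≠ ⊤ := by
      rw [hν, withDensity_apply _ MeasurableSet.univ, Measure.restrict_univ]
      have := lintegral_rpow_enorm_lt_top_of_eLpNorm_lt_top (f := (η : ℝ → H))
        (by norm_num) (by norm_num) (Lp.eLpNorm_lt_top η)
      simpa [enorm_eq_nnnorm] using this.ne
    have hν0 : Filter.Tendsto (fun a : ℝ => ν (Set.Iio a)) Filter.atBot (nhds 0) := by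
      have hempty : (⋂ a : ℝ, Set.Iio a) = (∅ : Set ℝ) := by
        apply Set.eq_empty_iff_forall_notMem.2
        intro x hx
        simpa using Set.mem_iInter.1 hx x
      have h := tendsto_measure_iInter_atBot (μ := ν) (s := fun a : ℝ => Set.Iio a)
        (fun _ => measurableSet_Iio.nullMeasurableSet)
        (fun _ _ hab => Set.Iio_subset_Iio hab)
        ⟨0, (lt_of_le_of_lt (measure_mono (Set.subset_univ _)) hfin.lt_top).ne⟩
      rw [hempty, measure_empty] at h
      exact h
    have heq : ∀ a : ℝ, eLpNorm (η : ℝ → H) 2 (volume.restrict (Set.Iio a))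
        = (ν (Set.Iio a)) ^ (1/(2:ℝ)) := by
      intro a
      rw [eLpNorm_eq_lintegral_rpow_enorm_toReal (by norm_num) (by norm_num),
        ENNReal.toReal_ofNat]
      exact congrArg (fun x => x ^ (1/(2:ℝ))) (hmeas a)
    have hrp : Filter.Tendsto (fun a : ℝ => (ν (Set.Iio a)) ^ (1/(2:ℝ)))
        Filter.atBot (nhds 0) := by
      have hcont : Filter.Tendsto (fun x : ENNReal => x ^ (1/(2:ℝ))) (nhds 0)
          (nhds ((0 : ENNReal) ^ (1/(2:ℝ)))) := (ENNReal.continuous_rpow_const).tendsto 0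
      rw [ENNReal.zero_rpow_of_pos (by norm_num)] at hcont
      exact hcont.comp hν0
    have h1 : Filter.Tendsto (fun a : ℝ => eLpNorm (η : ℝ → H) 2 (volume.restrict (Set.Iio a)))
        Filter.atBot (nhds 0) := by
      simp only [heq]; exact hrp
    have h2 := (ENNReal.tendsto_toReal (a := 0) (by norm_num)).comp h1
    simpa [Function.comp_def] using h2
  -- convergence P τ_y η → τ_y η
  have htend : ∀ η : Lp H 2 (volume : Measure ℝ),
      Filter.Tendsto (fun y : ℝ => ‖Pplus (τ y η) - τ y η‖) Filter.atTop (nhds 0) := by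
    intro η
    have h := (htail η).comp Filter.tendsto_neg_atTop_atBot
    simp only [Function.comp_def] at h
    simpa only [hkey η] using h
  refine le_antisymm ?_ ?_
  · -- ‖P A P‖ ≤ ‖A‖
    refine ContinuousLinearMap.opNorm_le_bound _ (norm_nonneg A) fun ξ => ?_
    calc ‖(Pplus * A * Pplus) ξ‖ = ‖Pplus (A (Pplus ξ))‖ := rfl
      _ ≤ ‖A (Pplus ξ)‖ := hPn _
      _ ≤ ‖A‖ * ‖Pplus ξ‖ := A.le_opNorm _
      _ ≤ ‖A‖ * ‖ξ‖ := mul_le_mul_of_nonneg_left (hPn ξ) (norm_nonneg A)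
  · -- ‖A‖ ≤ ‖P A P‖
    refine ContinuousLinearMap.opNorm_le_bound _ (norm_nonneg _) fun ξ => ?_
    have key : ∀ y : ℝ, ‖A ξ‖ ≤ ‖Pplus * A * Pplus‖ * ‖ξ‖
        + (‖Pplus (τ y (A ξ)) - τ y (A ξ)‖ + ‖A‖ * ‖Pplus (τ y ξ) - τ y ξ‖) := by
      intro y
      have hAc : A (τ y ξ) = τ y (A ξ) := by
        have h := hcomm y
        calc A (τ y ξ) = (A * τ y) ξ := rfl
          _ = (τ y * A) ξ := by rw [h]
          _ = τ y (A ξ) := rfl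
      have hsplit : τ y (A ξ) - (Pplus * A * Pplus) (τ y ξ)
          = (τ y (A ξ) - Pplus (τ y (A ξ)))
            + Pplus (A (τ y ξ - Pplus (τ y ξ))) := by
        have h1 : (Pplus * A * Pplus) (τ y ξ) = Pplus (A (Pplus (τ y ξ))) := rfl
        rw [h1, map_sub A, map_sub Pplus, hAc]
        abel
      have step1 : ‖τ y (A ξ)‖ ≤ ‖(Pplus * A * Pplus) (τ y ξ)‖
          + ‖τ y (A ξ) - (Pplus * A * Pplus) (τ y ξ)‖ := by
        calc ‖τ y (A ξ)‖
            = ‖(Pplus * A * Pplus) (τ y ξ) + (τ y (A ξ) - (Pplus * A * Pplus) (τ y ξ))‖ := by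
              rw [add_sub_cancel]
          _ ≤ _ := norm_add_le _ _
      have step2 : ‖τ y (A ξ) - (Pplus * A * Pplus) (τ y ξ)‖
          ≤ ‖Pplus (τ y (A ξ)) - τ y (A ξ)‖ + ‖A‖ * ‖Pplus (τ y ξ) - τ y ξ‖ := by
        rw [hsplit]
        refine le_trans (norm_add_le _ _) (add_le_add ?_ ?_)
        · rw [norm_sub_rev]
        · refine le_trans (hPn _) (le_trans (A.le_opNorm _) ?_)
          rw [norm_sub_rev]
      have step3 : ‖(Pplus * A * Pplus) (τ y ξ)‖ ≤ ‖Pplus * A * Pplus‖ * ‖ξ‖ := by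
        have := (Pplus * A * Pplus).le_opNorm (τ y ξ)
        rwa [hτn y ξ] at this
      calc ‖A ξ‖ = ‖τ y (A ξ)‖ := (hτn y (A ξ)).symm
        _ ≤ ‖(Pplus * A * Pplus) (τ y ξ)‖ + ‖τ y (A ξ) - (Pplus * A * Pplus) (τ y ξ)‖ := step1
        _ ≤ ‖Pplus * A * Pplus‖ * ‖ξ‖
            + (‖Pplus (τ y (A ξ)) - τ y (A ξ)‖ + ‖A‖ * ‖Pplus (τ y ξ) - τ y ξ‖) :=
          add_le_add step3 step2
    have hlim : Filter.Tendsto (fun y : ℝ => ‖Pplus * A * Pplus‖ * ‖ξ‖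
        + (‖Pplus (τ y (A ξ)) - τ y (A ξ)‖ + ‖A‖ * ‖Pplus (τ y ξ) - τ y ξ‖))
        Filter.atTop (nhds (‖Pplus * A * Pplus‖ * ‖ξ‖ + (0 + ‖A‖ * 0))) :=
      tendsto_const_nhds.add ((htend (A ξ)).add ((htend ξ).const_mul ‖A‖))
    have := ge_of_tendsto' hlim key
    simpa using this
end

section
/- Let f₁,…,f_k : ℝ → B(H) be Bochner integrable functions vanishing almost everywhere on (−∞,0). For every *-polynomial p in k operator variables, ‖p(T_{f₁},…,T_{f_k})‖ ≤ ‖p(T⁺_{f₁},…,T⁺_{f_k})‖. (This is Corollary 3.12 of the paper, 'ψ₊ majorizes ψ̃' in the continuous case, obtained by combining the translation-commutant compression lemma with the limit formula lim_{x→∞}‖V_x* p(T⁺) V_x − P₊ p(T) P₊‖ = 0.) -/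
open MeasureTheory ContinuousLinearMap Filter
open scoped InnerProductSpace

set_option linter.unusedSectionVars false

section Helpers
variable {H : Type} [NormedAddCommGroup H] [InnerProductSpace ℂ H] [CompleteSpace H]

noncomputable def tau (y : ℝ) : Lp H 2 (volume : Measure ℝ) →L[ℂ] Lp H 2 (volume : Measure ℝ) :=
  (Lp.compMeasurePreservingₗᵢ ℂ (fun t => t - y)
    (measurePreserving_sub_right volume y)).toContinuousLinearMap

lemma tau_coe (y : ℝ) (ξ : Lp H 2 (volume : Measure ℝ)) :
    (tau y ξ : ℝ → H) =ᵐ[volume] fun t => ξ (t - y) :=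
  Lp.coeFn_compMeasurePreserving ξ _

lemma tau_norm (y : ℝ) (ξ : Lp H 2 (volume : Measure ℝ)) : ‖tau y ξ‖ = ‖ξ‖ :=
  Lp.norm_compMeasurePreserving ξ _

lemma ae_sub {δ : Type*} (c : ℝ) {g h : ℝ → δ} (hgh : g =ᵐ[volume] h) :
    (fun t => g (t - c)) =ᵐ[volume] fun t => h (t - c) :=
  (measurePreserving_sub_right volume c).quasiMeasurePreserving.ae_eq_comp hgh

lemma mp_sub_left (t : ℝ) : MeasurePreserving (fun y : ℝ => t - y) volume volume := by
  have h : (fun y : ℝ => t - y) = (fun y : ℝ => -(y - t)) := by funext y; ring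
  rw [h]
  exact (Measure.measurePreserving_neg volume).comp (measurePreserving_sub_right volume t)

lemma ae_sub_left {δ : Type*} (t : ℝ) {g h : ℝ → δ} (hgh : g =ᵐ[volume] h) :
    (fun y => g (t - y)) =ᵐ[volume] fun y => h (t - y) :=
  (mp_sub_left t).quasiMeasurePreserving.ae_eq_comp hgh

lemma tau_tau (y z : ℝ) (ξ : Lp H 2 (volume : Measure ℝ)) :
    tau y (tau z ξ) = tau (y + z) ξ := by
  apply Lp.ext
  calc (tau y (tau z ξ) : ℝ → H)
      =ᵐ[volume] fun t => (tau z ξ) (t - y) := tau_coe y _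
    _ =ᵐ[volume] fun t => ξ (t - y - z) := ae_sub y (tau_coe z ξ)
    _ =ᵐ[volume] fun t => ξ (t - (y + z)) := by
        rw [show (fun t : ℝ => ξ (t - y - z)) = fun t => ξ (t - (y + z)) by
          funext t; rw [sub_sub]]
    _ =ᵐ[volume] (tau (y + z) ξ : ℝ → H) := (tau_coe (y + z) ξ).symm

lemma tau_zero (ξ : Lp H 2 (volume : Measure ℝ)) : tau 0 ξ = ξ := by
  apply Lp.ext
  filter_upwards [tau_coe (H := H) 0 ξ] with t ht
  simpa using ht

lemma tau_adjoint (y : ℝ) : adjoint (tau (H := H) y) = tau (-y) := by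
  symm
  rw [eq_adjoint_iff]
  intro ξ η
  rw [L2.inner_def, L2.inner_def]
  have h1 : (fun t => (⟪(tau (-y) ξ : ℝ → H) t, (η : ℝ → H) t⟫_ℂ))
      =ᵐ[volume] fun t => ⟪(ξ : ℝ → H) (t - -y), (η : ℝ → H) t⟫_ℂ := by
    filter_upwards [tau_coe (-y) ξ] with t ht
    rw [ht]
  rw [integral_congr_ae h1]
  have h2 : (fun t => (⟪(ξ : ℝ → H) t, (tau y η : ℝ → H) t⟫_ℂ))
      =ᵐ[volume] fun t => ⟪(ξ : ℝ → H) t, (η : ℝ → H) (t - y)⟫_ℂ := by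
    filter_upwards [tau_coe y η] with t ht
    rw [ht]
  rw [integral_congr_ae h2]
  have := integral_sub_right_eq_self (μ := volume)
    (fun t => (⟪(ξ : ℝ → H) (t - -y), (η : ℝ → H) t⟫_ℂ)) y
  rw [← this]
  congr 1
  funext t
  rw [sub_neg_eq_add, sub_add_cancel]

end Helpers

section Helpers2
variable {H : Type} [NormedAddCommGroup H] [InnerProductSpace ℂ H] [CompleteSpace H]

lemma strong_mul {E : Type*} [NormedAddCommGroup E] [NormedSpace ℂ E]
    {A B : ℕ → E →L[ℂ] E} {A' B' : E →L[ℂ] E} {C : ℝ}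
    (hC : ∀ n, ‖A n‖ ≤ C)
    (hA : ∀ ξ, Tendsto (fun n => A n ξ) atTop (nhds (A' ξ)))
    (hB : ∀ ξ, Tendsto (fun n => B n ξ) atTop (nhds (B' ξ))) (ξ : E) :
    Tendsto (fun n => A n (B n ξ)) atTop (nhds (A' (B' ξ))) := by
  have h1 : Tendsto (fun n => A n (B n ξ) - A n (B' ξ)) atTop (nhds 0) := by
    apply squeeze_zero_norm (a := fun n => C * ‖B n ξ - B' ξ‖)
    · intro n
      calc ‖A n (B n ξ) - A n (B' ξ)‖ = ‖A n (B n ξ - B' ξ)‖ := by rw [map_sub]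
        _ ≤ ‖A n‖ * ‖B n ξ - B' ξ‖ := le_opNorm _ _
        _ ≤ C * ‖B n ξ - B' ξ‖ :=
            mul_le_mul_of_nonneg_right (hC n) (norm_nonneg _)
    · have := tendsto_iff_norm_sub_tendsto_zero.mp (hB ξ)
      simpa using this.const_mul C
  have h2 := hA (B' ξ)
  have h3 := h1.add h2
  simp only [sub_add_cancel, zero_add] at h3
  exact h3

lemma L2_norm_sq (η : Lp H 2 (volume : Measure ℝ)) :
    ‖η‖ ^ 2 = ∫ t, ‖(η : ℝ → H) t‖ ^ 2 ∂volume := by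
  have h1 : (⟪η, η⟫_ℂ) = ((‖η‖ : ℂ)) ^ 2 := inner_self_eq_norm_sq_to_K η
  rw [L2.inner_def] at h1
  have h2 : (fun t => (⟪(η : ℝ → H) t, (η : ℝ → H) t⟫_ℂ))
      = fun t => (RCLike.ofReal (K := ℂ) (‖(η : ℝ → H) t‖ ^ 2)) := by
    funext t
    rw [inner_self_eq_norm_sq_to_K, RCLike.ofReal_pow]
  rw [h2, integral_ofReal] at h1
  have h3 : RCLike.ofReal (K := ℂ) (∫ t, ‖(η : ℝ → H) t‖ ^ 2 ∂volume)
      = RCLike.ofReal (K := ℂ) (‖η‖ ^ 2) := by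
    rw [h1, RCLike.ofReal_pow]
    rfl
  exact (RCLike.ofReal_inj.mp h3).symm

lemma P_selfadjoint (P : Lp H 2 (volume : Measure ℝ) →L[ℂ] Lp H 2 (volume : Measure ℝ))
    (hP : ∀ ξ : Lp H 2 (volume : Measure ℝ),
      (P ξ : ℝ → H) =ᵐ[volume] fun t => if 0 ≤ t then ξ t else 0) :
    adjoint P = P := by
  symm
  rw [eq_adjoint_iff]
  intro ξ η
  rw [L2.inner_def, L2.inner_def]
  apply integral_congr_ae
  filter_upwards [hP ξ, hP η] with t h1 h2
  rw [h1, h2]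
  by_cases h : (0:ℝ) ≤ t
  · simp [h]
  · simp [h]

lemma P_norm_le (P : Lp H 2 (volume : Measure ℝ) →L[ℂ] Lp H 2 (volume : Measure ℝ))
    (hP : ∀ ξ : Lp H 2 (volume : Measure ℝ),
      (P ξ : ℝ → H) =ᵐ[volume] fun t => if 0 ≤ t then ξ t else 0)
    (ξ : Lp H 2 (volume : Measure ℝ)) : ‖P ξ‖ ≤ ‖ξ‖ := by
  rw [Lp.norm_def, Lp.norm_def]
  apply ENNReal.toReal_mono (Lp.eLpNorm_ne_top ξ)
  rw [eLpNorm_congr_ae (hP ξ)]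
  apply eLpNorm_mono_ae
  filter_upwards with t
  by_cases h : (0:ℝ) ≤ t
  · simp [h]
  · simp [h]

lemma T_comm (f : ℝ → H →L[ℂ] H)
    (Tj : Lp H 2 (volume : Measure ℝ) →L[ℂ] Lp H 2 (volume : Measure ℝ))
    (hTj : ∀ ξ : Lp H 2 (volume : Measure ℝ),
      (Tj ξ : ℝ → H) =ᵐ[volume] fun t => ∫ y, f y (ξ (t - y)) ∂volume)
    (c : ℝ) (ξ : Lp H 2 (volume : Measure ℝ)) :
    Tj (tau c ξ) = tau c (Tj ξ) := by
  apply Lp.ext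
  calc (Tj (tau c ξ) : ℝ → H)
      =ᵐ[volume] fun t => ∫ y, f y ((tau c ξ : ℝ → H) (t - y)) ∂volume := hTj _
    _ =ᵐ[volume] fun t => ∫ y, f y ((ξ : ℝ → H) (t - c - y)) ∂volume := by
        filter_upwards with t
        apply integral_congr_ae
        filter_upwards [ae_sub_left t (tau_coe c ξ)] with y hy
        rw [hy, sub_right_comm]
    _ =ᵐ[volume] fun t => (Tj ξ : ℝ → H) (t - c) := by
        have := ae_sub c (hTj ξ)
        exact this.symm
    _ =ᵐ[volume] (tau c (Tj ξ) : ℝ → H) := (tau_coe c (Tj ξ)).symm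

end Helpers2

section Helpers3
variable {H : Type} [NormedAddCommGroup H] [InnerProductSpace ℂ H] [CompleteSpace H]

noncomputable def Qn (P : Lp H 2 (volume : Measure ℝ) →L[ℂ] Lp H 2 (volume : Measure ℝ))
    (n : ℕ) : Lp H 2 (volume : Measure ℝ) →L[ℂ] Lp H 2 (volume : Measure ℝ) :=
  (tau (-(n:ℝ))).comp (P.comp (tau (n:ℝ)))

variable (P : Lp H 2 (volume : Measure ℝ) →L[ℂ] Lp H 2 (volume : Measure ℝ))
  (hP : ∀ ξ : Lp H 2 (volume : Measure ℝ),
    (P ξ : ℝ → H) =ᵐ[volume] fun t => if 0 ≤ t then ξ t else 0)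

include hP

lemma Qn_coe (n : ℕ) (ξ : Lp H 2 (volume : Measure ℝ)) :
    (Qn P n ξ : ℝ → H) =ᵐ[volume] fun t => if 0 ≤ t + n then ξ t else 0 := by
  have e1 : (Qn P n ξ : ℝ → H) =ᵐ[volume] fun t => (P (tau (n:ℝ) ξ)) (t - -(n:ℝ)) :=
    tau_coe _ _
  have e2 : (fun t => (P (tau (n:ℝ) ξ) : ℝ → H) (t - -(n:ℝ)))
      =ᵐ[volume] fun t => if 0 ≤ t - -(n:ℝ) then (tau (n:ℝ) ξ : ℝ → H) (t - -(n:ℝ)) else 0 :=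
    ae_sub (-(n:ℝ)) (hP (tau (n:ℝ) ξ))
  have e3 : (fun t => if 0 ≤ t - -(n:ℝ) then (tau (n:ℝ) ξ : ℝ → H) (t - -(n:ℝ)) else 0)
      =ᵐ[volume] fun t => if 0 ≤ t - -(n:ℝ) then (ξ : ℝ → H) (t - -(n:ℝ) - n) else 0 := by
    filter_upwards [ae_sub (-(n:ℝ)) (tau_coe (n:ℝ) ξ)] with t ht
    rw [ht]
  have e4 : (fun t : ℝ => if 0 ≤ t - -(n:ℝ) then (ξ : ℝ → H) (t - -(n:ℝ) - n) else 0)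
      = fun t : ℝ => if 0 ≤ t + (n:ℝ) then (ξ : ℝ → H) t else 0 := by
    funext t
    rw [sub_neg_eq_add, add_sub_cancel_right]
  exact ((e1.trans e2).trans e3).trans (by rw [e4])

lemma Qn_norm_le (n : ℕ) (ξ : Lp H 2 (volume : Measure ℝ)) : ‖Qn P n ξ‖ ≤ ‖ξ‖ := by
  have : Qn P n ξ = tau (-(n:ℝ)) (P (tau (n:ℝ) ξ)) := rfl
  rw [this, tau_norm]
  calc ‖P (tau (n:ℝ) ξ)‖ ≤ ‖tau (n:ℝ) ξ‖ := P_norm_le P hP _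
    _ = ‖ξ‖ := tau_norm _ _

lemma Qn_adjoint (n : ℕ) : adjoint (Qn P n) = Qn P n := by
  unfold Qn
  rw [adjoint_comp, adjoint_comp, tau_adjoint, tau_adjoint, P_selfadjoint P hP, neg_neg,
    ContinuousLinearMap.comp_assoc]

lemma Qn_tendsto (ξ : Lp H 2 (volume : Measure ℝ)) :
    Tendsto (fun n => Qn P n ξ) atTop (nhds ξ) := by
  rw [tendsto_iff_norm_sub_tendsto_zero]
  set g : ℝ → ℝ := fun t => ‖(ξ : ℝ → H) t‖ ^ 2 with hg
  have hgmeas : AEStronglyMeasurable g volume := by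
    have := (Lp.aestronglyMeasurable ξ).norm
    simp only [hg, pow_two]; exact this.mul this
  have hgint : Integrable g volume := by
    have h := (Lp.memLp ξ).integrable_norm_rpow (by norm_num) (by norm_num)
    apply h.congr
    filter_upwards with t
    rw [hg]
    norm_num
  have key : ∀ n : ℕ, ‖Qn P n ξ - ξ‖ ^ 2
      = ∫ t, (if 0 ≤ t + (n:ℝ) then (0:ℝ) else g t) ∂volume := by
    intro n
    rw [L2_norm_sq]
    apply integral_congr_ae
    filter_upwards [Lp.coeFn_sub (Qn P n ξ) ξ, Qn_coe P hP n ξ] with t h1 h2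
    rw [h1]
    simp only [Pi.sub_apply]
    rw [h2]
    by_cases h : (0:ℝ) ≤ t + n
    · simp [h, hg]
    · simp [h, hg]
  have htend : Tendsto (fun n : ℕ => ∫ t, (if 0 ≤ t + (n:ℝ) then (0:ℝ) else g t) ∂volume)
      atTop (nhds 0) := by
    have hDCT := tendsto_integral_of_dominated_convergence (μ := volume)
      (F := fun (n : ℕ) (t : ℝ) => if 0 ≤ t + (n:ℝ) then (0:ℝ) else g t)
      (f := fun _ => (0:ℝ)) g ?_ ?_ ?_ ?_
    · simpa using hDCT
    · intro n
      have hs : MeasurableSet {t : ℝ | t + (n:ℝ) < 0} := by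
        have : {t : ℝ | t + (n:ℝ) < 0} = (fun t : ℝ => t + (n:ℝ)) ⁻¹' (Set.Iio 0) := rfl
        rw [this]
        exact (measurable_add_const _) measurableSet_Iio
      have hfi : (fun t => if 0 ≤ t + (n:ℝ) then (0:ℝ) else g t)
          = Set.indicator {t : ℝ | t + (n:ℝ) < 0} g := by
        funext t
        rw [Set.indicator_apply]
        by_cases h : (0:ℝ) ≤ t + n
        · simp [Set.mem_setOf_eq, not_lt.mpr h, h]
        · simp [Set.mem_setOf_eq, not_le.mp h, h]
      show AEStronglyMeasurable (fun t : ℝ => if 0 ≤ t + (n:ℝ) then (0:ℝ) else g t) volume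
      rw [hfi]
      exact hgmeas.indicator hs
    · exact hgint
    · intro n
      filter_upwards with t
      by_cases h : (0:ℝ) ≤ t + n
      · simp [h, hg, sq_nonneg]
      · simp [h, hg, Real.norm_of_nonneg (sq_nonneg _), le_refl]
    · filter_upwards with t
      have : ∀ᶠ n : ℕ in atTop, (if 0 ≤ t + (n:ℝ) then (0:ℝ) else g t) = 0 := by
        filter_upwards [eventually_ge_atTop ⌈(-t : ℝ)⌉₊] with n hn
        have h1 : (-t : ℝ) ≤ n := le_trans (Nat.le_ceil _) (by exact_mod_cast hn)
        rw [if_pos (by linarith)]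
      have h' : (fun n : ℕ => (if 0 ≤ t + (n:ℝ) then (0:ℝ) else g t)) =ᶠ[atTop]
          fun _ => (0:ℝ) := this
      exact Tendsto.congr' h'.symm tendsto_const_nhds
  have hsq : Tendsto (fun n : ℕ => ‖Qn P n ξ - ξ‖ ^ 2) atTop (nhds 0) := by
    rw [show (fun n : ℕ => ‖Qn P n ξ - ξ‖ ^ 2)
        = fun n : ℕ => ∫ t, (if 0 ≤ t + (n:ℝ) then (0:ℝ) else g t) ∂volume from funext key]
    exact htend
  have := hsq.sqrt
  simp only [Real.sqrt_zero] at this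
  apply this.congr
  intro n
  rw [Real.sqrt_sq (norm_nonneg _)]

end Helpers3

set_option maxHeartbeats 1000000 in
/-- For Bochner integrable `f₁,…,f_k : ℝ → B(H)` vanishing a.e. on `(−∞,0)`
and any *-polynomial `p`, `‖p(T_{f₁},…,T_{f_k})‖ ≤ ‖p(T⁺_{f₁},…,T⁺_{f_k})‖`, where `T_f`
is convolution by `f` on `L²(ℝ,H)` and `T⁺_f = P₊ T_f P₊` with `P₊` the projection onto
`{ξ : ξ(t) = 0 a.e. t < 0}`. -/
theorem stmt10 {H : Type} [NormedAddCommGroup H] [InnerProductSpace ℂ H] [CompleteSpace H]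
    {k : ℕ} (f : Fin k → ℝ → H →L[ℂ] H)
    (hf : ∀ j, Integrable (f j) volume)
    (hf0 : ∀ j, ∀ᵐ y : ℝ ∂volume, y < 0 → f j y = 0)
    (Pplus : Lp H 2 (volume : Measure ℝ) →L[ℂ] Lp H 2 (volume : Measure ℝ))
    (hP : ∀ ξ : Lp H 2 (volume : Measure ℝ),
      (Pplus ξ : ℝ → H) =ᵐ[volume] fun t => if 0 ≤ t then ξ t else 0)
    (T : Fin k → Lp H 2 (volume : Measure ℝ) →L[ℂ] Lp H 2 (volume : Measure ℝ))
    (hT : ∀ (j : Fin k) (ξ : Lp H 2 (volume : Measure ℝ)),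
      (T j ξ : ℝ → H) =ᵐ[volume] fun t => ∫ y, f j y (ξ (t - y)) ∂volume)
    (p : List (ℂ × List (Fin k × Bool))) :
    ‖evalPoly T p‖ ≤ ‖evalPoly (fun j => Pplus * T j * Pplus) p‖ := by
  classical
  -- commutation of T j with translations
  have hcomm : ∀ (j : Fin k) (c : ℝ) (ξ : Lp H 2 (volume : Measure ℝ)),
      T j (tau c ξ) = tau c (T j ξ) := fun j c ξ => T_comm (f j) (T j) (hT j) c ξ
  set S : Fin k → Lp H 2 (volume : Measure ℝ) →L[ℂ] Lp H 2 (volume : Measure ℝ) :=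
    fun j => Pplus * T j * Pplus with hS
  set R : ℕ → Fin k → Lp H 2 (volume : Measure ℝ) →L[ℂ] Lp H 2 (volume : Measure ℝ) :=
    fun n j => Qn Pplus n * T j * Qn Pplus n with hR
  -- conjugation identity
  have hconj : ∀ (j : Fin k) (n : ℕ),
      R n j = (tau (-(n:ℝ))).comp ((S j).comp (tau (n:ℝ))) := by
    intro j n
    refine ContinuousLinearMap.ext fun ξ => ?_
    show Qn Pplus n (T j (Qn Pplus n ξ)) = tau (-(n:ℝ)) (Pplus (T j (Pplus (tau (n:ℝ) ξ))))
    show tau (-(n:ℝ)) (Pplus (tau (n:ℝ) (T j (tau (-(n:ℝ)) (Pplus (tau (n:ℝ) ξ))))))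
      = tau (-(n:ℝ)) (Pplus (T j (Pplus (tau (n:ℝ) ξ))))
    rw [hcomm j (-(n:ℝ)), tau_tau, show (n:ℝ) + -(n:ℝ) = 0 by ring, tau_zero]
  have hadjconj : ∀ (j : Fin k) (n : ℕ),
      adjoint (R n j) = (tau (-(n:ℝ))).comp ((adjoint (S j)).comp (tau (n:ℝ))) := by
    intro j n
    rw [hconj j n, adjoint_comp, adjoint_comp, tau_adjoint, tau_adjoint, neg_neg,
      ContinuousLinearMap.comp_assoc]
  -- operator-level word identity
  have hword : ∀ (w : List (Fin k × Bool)) (n : ℕ),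
      evalWord (R n) w = (tau (-(n:ℝ))).comp ((evalWord S w).comp (tau (n:ℝ))) := by
    intro w
    induction w with
    | nil =>
      intro n
      refine ContinuousLinearMap.ext fun ξ => ?_
      show ξ = tau (-(n:ℝ)) (tau (n:ℝ) ξ)
      rw [tau_tau, show -(n:ℝ) + (n:ℝ) = 0 by ring, tau_zero]
    | cons ib w ih =>
      intro n
      obtain ⟨i, b⟩ := ib
      refine ContinuousLinearMap.ext fun ξ => ?_
      show (if b then adjoint (R n i) else R n i) (evalWord (R n) w ξ)
        = tau (-(n:ℝ)) ((if b then adjoint (S i) else S i) (evalWord S w (tau (n:ℝ) ξ)))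
      rw [ih n]
      cases b
      · simp only [if_false, Bool.false_eq_true]
        rw [hconj i n]
        show tau (-(n:ℝ)) ((S i) (tau (n:ℝ) (tau (-(n:ℝ)) (evalWord S w (tau (n:ℝ) ξ)))))
          = _
        rw [tau_tau, show (n:ℝ) + -(n:ℝ) = 0 by ring, tau_zero]
      · simp only [if_true]
        rw [hadjconj i n]
        show tau (-(n:ℝ)) ((adjoint (S i))
            (tau (n:ℝ) (tau (-(n:ℝ)) (evalWord S w (tau (n:ℝ) ξ))))) = _
        rw [tau_tau, show (n:ℝ) + -(n:ℝ) = 0 by ring, tau_zero]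
  -- strong convergence of letters
  have hRapp : ∀ n j ξ, R n j ξ = Qn Pplus n (T j (Qn Pplus n ξ)) := fun n j ξ => rfl
  have hQop : ∀ n : ℕ, ‖(Qn (H := H) Pplus n : Lp H 2 (volume : Measure ℝ) →L[ℂ] _)‖ ≤ 1 :=
    fun n => ContinuousLinearMap.opNorm_le_bound _ zero_le_one
      (fun ξ => by rw [one_mul]; exact Qn_norm_le Pplus hP n ξ)
  have hQid : ∀ ξ, Tendsto (fun n => Qn Pplus n ξ) atTop
      (nhds ((1 : Lp H 2 (volume : Measure ℝ) →L[ℂ] Lp H 2 (volume : Measure ℝ)) ξ)) := by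
    intro ξ
    rw [ContinuousLinearMap.one_apply]
    exact Qn_tendsto Pplus hP ξ
  have hlet : ∀ (A : Lp H 2 (volume : Measure ℝ) →L[ℂ] Lp H 2 (volume : Measure ℝ)) ξ,
      Tendsto (fun n => Qn Pplus n (A (Qn Pplus n ξ))) atTop (nhds (A ξ)) := by
    intro A ξ
    have hB : ∀ ξ, Tendsto (fun n => (A.comp (Qn Pplus n)) ξ) atTop (nhds (A ξ)) := by
      intro ζ
      have := (A.continuous.tendsto ζ).comp (Qn_tendsto Pplus hP ζ)
      exact this
    have := strong_mul (A := fun n => Qn Pplus n) (A' := 1)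
      (B := fun n => A.comp (Qn Pplus n)) (B' := A) (C := 1) hQop hQid hB ξ
    simpa using this
  have hlettend : ∀ (i : Fin k) (b : Bool) ξ,
      Tendsto (fun n => (if b then adjoint (R n i) else R n i) ξ) atTop
        (nhds ((if b then adjoint (T i) else T i) ξ)) := by
    intro i b ξ
    cases b
    · simpa [hRapp] using hlet (T i) ξ
    · simp only [if_true]
      have hadj : ∀ n, adjoint (R n i)
          = (Qn Pplus n).comp ((adjoint (T i)).comp (Qn Pplus n)) := by
        intro n
        have : R n i = ((Qn Pplus n).comp (T i)).comp (Qn Pplus n) := rfl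
        rw [this, adjoint_comp, adjoint_comp, Qn_adjoint Pplus hP]
      have := hlet (adjoint (T i)) ξ
      apply this.congr
      intro n
      rw [hadj n]
      rfl
  -- uniform bound for letters
  have hletbound : ∀ (i : Fin k) (b : Bool) (n : ℕ),
      ‖if b then adjoint (R n i) else R n i‖ ≤ ‖T i‖ := by
    intro i b n
    have hRb : ‖R n i‖ ≤ ‖T i‖ := by
      apply ContinuousLinearMap.opNorm_le_bound _ (norm_nonneg _)
      intro ξ
      rw [hRapp]
      calc ‖Qn Pplus n (T i (Qn Pplus n ξ))‖ ≤ ‖T i (Qn Pplus n ξ)‖ :=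
            Qn_norm_le Pplus hP n _
        _ ≤ ‖T i‖ * ‖Qn Pplus n ξ‖ := le_opNorm _ _
        _ ≤ ‖T i‖ * ‖ξ‖ :=
            mul_le_mul_of_nonneg_left (Qn_norm_le Pplus hP n ξ) (norm_nonneg _)
    cases b
    · simpa only [Bool.false_eq_true, if_false] using hRb
    · simp only [if_true]
      rw [LinearIsometryEquiv.norm_map (ContinuousLinearMap.adjoint) (R n i)]
      exact hRb
  -- strong convergence of words
  have hwordtend : ∀ (w : List (Fin k × Bool)) ξ,
      Tendsto (fun n => evalWord (R n) w ξ) atTop (nhds (evalWord T w ξ)) := by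
    intro w
    induction w with
    | nil => intro ξ; simp only [evalWord]; exact tendsto_const_nhds
    | cons ib w ih =>
      intro ξ
      obtain ⟨i, b⟩ := ib
      have := strong_mul (A := fun n => if b then adjoint (R n i) else R n i)
        (A' := if b then adjoint (T i) else T i)
        (B := fun n => evalWord (R n) w) (B' := evalWord T w) (C := ‖T i‖)
        (hletbound i b) (hlettend i b) ih ξ
      simpa only [evalWord, ContinuousLinearMap.mul_apply] using this
  -- strong convergence of the polynomial
  have hpolytend : ∀ ξ, Tendsto (fun n => evalPoly (R n) p ξ) atTop
      (nhds (evalPoly T p ξ)) := by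
    intro ξ
    induction p with
    | nil => simp only [evalPoly, List.map_nil, List.sum_nil]; exact tendsto_const_nhds
    | cons cw q ih =>
      have e1 : ∀ (M : Fin k → Lp H 2 (volume : Measure ℝ) →L[ℂ] Lp H 2 (volume : Measure ℝ)),
          evalPoly M (cw :: q) ξ = cw.1 • evalWord M cw.2 ξ + evalPoly M q ξ := by
        intro M; simp [evalPoly]
      simp only [e1]
      exact (((hwordtend cw.2 ξ).const_smul cw.1).add ih)
  -- operator-level polynomial identity
  have hpoly : ∀ n : ℕ,
      evalPoly (R n) p = (tau (-(n:ℝ))).comp ((evalPoly S p).comp (tau (n:ℝ))) := by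
    intro n
    clear hpolytend
    induction p with
    | nil =>
      refine ContinuousLinearMap.ext fun ξ => ?_
      show (0 : Lp H 2 (volume : Measure ℝ)) = tau (-(n:ℝ)) ((0 : _ →L[ℂ] _) (tau (n:ℝ) ξ))
      simp
    | cons cw q ih =>
      refine ContinuousLinearMap.ext fun ξ => ?_
      have e1 : evalPoly (R n) (cw :: q) ξ
          = cw.1 • evalWord (R n) cw.2 ξ + evalPoly (R n) q ξ := by
        simp [evalPoly]
      have e2 : evalPoly S (cw :: q) (tau (n:ℝ) ξ)
          = cw.1 • evalWord S cw.2 (tau (n:ℝ) ξ) + evalPoly S q (tau (n:ℝ) ξ) := by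
        simp [evalPoly]
      simp only [ContinuousLinearMap.comp_apply, e2, map_add, _root_.map_smul]
      rw [e1, hword cw.2 n, ih]
      simp [ContinuousLinearMap.comp_apply]
  -- uniform bound
  have hbound : ∀ n ξ, ‖evalPoly (R n) p ξ‖ ≤ ‖evalPoly S p‖ * ‖ξ‖ := by
    intro n ξ
    rw [hpoly n]
    simp only [ContinuousLinearMap.comp_apply]
    rw [tau_norm]
    calc ‖evalPoly S p (tau (n:ℝ) ξ)‖ ≤ ‖evalPoly S p‖ * ‖tau (n:ℝ) ξ‖ := le_opNorm _ _
      _ = ‖evalPoly S p‖ * ‖ξ‖ := by rw [tau_norm]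
  -- conclusion
  apply ContinuousLinearMap.opNorm_le_bound _ (norm_nonneg _)
  intro ξ
  have h1 : Tendsto (fun n => ‖evalPoly (R n) p ξ‖) atTop (nhds ‖evalPoly T p ξ‖) :=
    (continuous_norm.tendsto _).comp (hpolytend ξ)
  exact le_of_tendsto h1 (Filter.Eventually.of_forall fun n => hbound n ξ)
end
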